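/- arXiv:2210.12325 — 5 statements merged into one kernel-verified Lean document; each statement's English description precedes it below -/
import Mathlib

section
/- In the formal power series ring ℚ[x,y][[t]], the following denominator-free form of Gessel's formula holds: (Σ_{n≥0} L_n(x,y)·tⁿ/n!) · (Σ_{n≥0} (y² − x²)ⁿ·t^{2n}/(2n)! − y·Σ_{n≥0} (y² − x²)ⁿ·t^{2n+1}/(2n+1)!) = x. -/
open MvPolynomial

/-- The `i`-th entry (1-indexed) of the permutation `σ` of `[n]`, with the
convention that positions `0` and `> n` carry the entry `0`. -/
def permEntry (n : ℕ) (σ : Equiv.Perm (Fin n)) (i : ℕ) : ℕ :=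
  if h : 1 ≤ i ∧ i ≤ n then ((σ ⟨i - 1, by omega⟩ : Fin n) : ℕ) + 1 else 0

/-- The number of left peaks of `σ`: indices `1 ≤ i ≤ n-1` with
`σ_{i-1} < σ_i > σ_{i+1}`, convention `σ₀ = 0`. -/
def leftPeakCount (n : ℕ) (σ : Equiv.Perm (Fin n)) : ℕ :=
  ((Finset.Icc 1 (n - 1)).filter fun i =>
    permEntry n σ (i - 1) < permEntry n σ i ∧ permEntry n σ (i + 1) < permEntry n σ i).card

/-- The number of exterior peaks of `σ`: indices `1 ≤ i ≤ n` with
`σ_{i-1} < σ_i > σ_{i+1}`, conventions `σ₀ = σ_{n+1} = 0`. -/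
def extPeakCount (n : ℕ) (σ : Equiv.Perm (Fin n)) : ℕ :=
  ((Finset.Icc 1 n).filter fun i =>
    permEntry n σ (i - 1) < permEntry n σ i ∧ permEntry n σ (i + 1) < permEntry n σ i).card

/-- The number of interior peaks of `σ`: indices `2 ≤ i ≤ n-1` with
`σ_{i-1} < σ_i > σ_{i+1}`. -/
def intPeakCount (n : ℕ) (σ : Equiv.Perm (Fin n)) : ℕ :=
  ((Finset.Icc 2 (n - 1)).filter fun i =>
    permEntry n σ (i - 1) < permEntry n σ i ∧ permEntry n σ (i + 1) < permEntry n σ i).card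

/-- The number of up-down runs of `σ`: maximal monotone segments of the
extended sequence `0, σ₁, …, σₙ`, i.e. one more than the number of direction
changes of that sequence (and `0` for `n = 0`). -/
def udRunCount (n : ℕ) (σ : Equiv.Perm (Fin n)) : ℕ :=
  if n = 0 then 0 else
    1 + ((Finset.Icc 1 (n - 1)).filter fun i =>
      (permEntry n σ (i - 1) < permEntry n σ i ∧ permEntry n σ (i + 1) < permEntry n σ i) ∨
      (permEntry n σ i < permEntry n σ (i - 1) ∧ permEntry n σ i < permEntry n σ (i + 1))).card

/-- The number of alternating runs of `σ`: maximal monotone segments of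
`σ₁, …, σₙ`, i.e. one more than the number of direction changes (and `0` for `n = 0`). -/
def altRunCount (n : ℕ) (σ : Equiv.Perm (Fin n)) : ℕ :=
  if n = 0 then 0 else
    1 + ((Finset.Icc 2 (n - 1)).filter fun i =>
      (permEntry n σ (i - 1) < permEntry n σ i ∧ permEntry n σ (i + 1) < permEntry n σ i) ∨
      (permEntry n σ i < permEntry n σ (i - 1) ∧ permEntry n σ i < permEntry n σ (i + 1))).card

/-- `L n k` : the number of permutations of `[n]` with exactly `k` left peaks. -/
def leftPeakNum (n k : ℕ) : ℕ :=
  (Finset.univ.filter fun σ : Equiv.Perm (Fin n) => leftPeakCount n σ = k).card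

/-- `W n k` : the number of permutations of `[n]` with exactly `k` exterior peaks. -/
def extPeakNum (n k : ℕ) : ℕ :=
  (Finset.univ.filter fun σ : Equiv.Perm (Fin n) => extPeakCount n σ = k).card

/-- `M n k` : the number of permutations of `[n]` with exactly `k` interior peaks. -/
def intPeakNum (n k : ℕ) : ℕ :=
  (Finset.univ.filter fun σ : Equiv.Perm (Fin n) => intPeakCount n σ = k).card

/-- `Λ n k` : the number of permutations of `[n]` with exactly `k` up-down runs. -/
def udRunNum (n k : ℕ) : ℕ :=
  (Finset.univ.filter fun σ : Equiv.Perm (Fin n) => udRunCount n σ = k).card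

/-- `R n k` : the number of permutations of `[n]` with exactly `k` alternating runs. -/
def altRunNum (n k : ℕ) : ℕ :=
  (Finset.univ.filter fun σ : Equiv.Perm (Fin n) => altRunCount n σ = k).card

/-- The bivariate left peak polynomial
`L_n(x,y) = Σ_{k=0}^{⌊n/2⌋} L(n,k)·x^{2k+1}·y^{n−2k}`. -/
noncomputable def Lb (n : ℕ) : MvPolynomial (Fin 2) ℚ :=
  ∑ k ∈ Finset.range (n / 2 + 1),
    (leftPeakNum n k : MvPolynomial (Fin 2) ℚ) * X 0 ^ (2 * k + 1) * X 1 ^ (n - 2 * k)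

/-- insertion of the max at position j -/
def ins (n : ℕ) (τ : Equiv.Perm (Fin n)) (j : Fin (n+1)) : Equiv.Perm (Fin (n+1)) :=
  (finSuccEquiv' j).trans ((Equiv.optionCongr τ).trans (finSuccEquiv' (Fin.last n)).symm)

lemma ins_at (n : ℕ) (τ : Equiv.Perm (Fin n)) (j : Fin (n+1)) : ins n τ j j = Fin.last n := by
  simp [ins, finSuccEquiv'_at, finSuccEquiv'_symm_none]

lemma ins_succAbove (n : ℕ) (τ : Equiv.Perm (Fin n)) (j : Fin (n+1)) (k : Fin n) :
    ins n τ j (j.succAbove k) = Fin.castSucc (τ k) := by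
  simp [ins, finSuccEquiv'_succAbove]

lemma ins_lt (n : ℕ) (τ : Equiv.Perm (Fin n)) (j : Fin (n+1)) (i : Fin (n+1))
    (h : (i : ℕ) < j) : ins n τ j i = Fin.castSucc (τ ⟨i, by omega⟩) := by
  have : i = j.succAbove ⟨i, by omega⟩ := by
    rw [Fin.succAbove_of_castSucc_lt]
    · rfl
    · exact h
  conv_lhs => rw [this]
  rw [ins_succAbove]

lemma ins_gt (n : ℕ) (τ : Equiv.Perm (Fin n)) (j : Fin (n+1)) (i : Fin (n+1))
    (h : (j : ℕ) < i) : ins n τ j i = Fin.castSucc (τ ⟨(i : ℕ) - 1, by omega⟩) := by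
  have : i = j.succAbove ⟨(i : ℕ) - 1, by omega⟩ := by
    rw [Fin.succAbove_of_le_castSucc]
    · ext; simp; omega
    · rw [Fin.le_castSucc_iff]
      simp [Fin.lt_def]; omega
  conv_lhs => rw [this]
  rw [ins_succAbove]

/-- entries of the inserted permutation -/
lemma pe_ins (n : ℕ) (τ : Equiv.Perm (Fin n)) (j : Fin (n+1)) (i : ℕ) :
    permEntry (n+1) (ins n τ j) i =
      if i = (j : ℕ) + 1 then n + 1
      else if i < (j : ℕ) + 1 then permEntry n τ i
      else permEntry n τ (i - 1) := by
  rcases Nat.lt_trichotomy i ((j : ℕ) + 1) with h | h | h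
  · rw [if_neg (by omega), if_pos h]
    rcases Nat.eq_zero_or_pos i with rfl | hi
    · simp [permEntry]
    · have hin : i ≤ n := by omega
      rw [permEntry, dif_pos ⟨hi, by omega⟩, permEntry, dif_pos ⟨hi, hin⟩]
      rw [ins_lt n τ j ⟨i - 1, by omega⟩ (by simp; omega)]
      simp
  · rw [if_pos h]
    subst h
    rw [permEntry, dif_pos ⟨by omega, by omega⟩]
    have : ((⟨(j : ℕ) + 1 - 1, by omega⟩ : Fin (n+1)) : Fin (n+1)) = j := by ext; simp
    rw [this, ins_at]
    simp
  · rw [if_neg (by omega), if_neg (by omega)]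
    by_cases hin : i ≤ n + 1
    · rw [permEntry, dif_pos ⟨by omega, hin⟩, permEntry, dif_pos ⟨by omega, by omega⟩]
      rw [ins_gt n τ j ⟨i - 1, by omega⟩ (by simp; omega)]
      simp
    · rw [permEntry, dif_neg (by omega), permEntry, dif_neg (by omega)]

/-- the insertion map is bijective -/
lemma ins_bijective (n : ℕ) :
    Function.Bijective (fun p : Equiv.Perm (Fin n) × Fin (n+1) => ins n p.1 p.2) := by
  rw [Fintype.bijective_iff_injective_and_card]
  constructor
  · rintro ⟨τ, j⟩ ⟨τ', j'⟩ h
    simp only at h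
    have hj : j = j' := by
      by_contra hne
      have h1 : ins n τ j j = Fin.last n := ins_at n τ j
      have h2 : ins n τ' j' j = Fin.last n := h ▸ h1
      rcases Nat.lt_or_ge (j : ℕ) (j' : ℕ) with hlt | hge
      · rw [ins_lt n τ' j' j hlt] at h2
        exact absurd h2 (Fin.castSucc_lt_last _).ne
      · have : (j' : ℕ) < (j : ℕ) := by
          rcases Nat.lt_or_ge (j' : ℕ) (j : ℕ) with h' | h'
          · exact h'
          · exfalso; exact hne (Fin.ext (by omega))
        rw [ins_gt n τ' j' j this] at h2
        exact absurd h2 (Fin.castSucc_lt_last _).ne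
    subst hj
    have hτ : τ = τ' := by
      apply Equiv.ext
      intro k
      have := congrArg (fun σ : Equiv.Perm (Fin (n+1)) => σ (j.succAbove k)) h
      simp only [ins_succAbove] at this
      exact Fin.castSucc_injective _ this
    rw [hτ]
  · simp [Fintype.card_perm, Nat.factorial_succ, Fintype.card_fin, mul_comm]

/-- the peak set of τ -/
def pks (n : ℕ) (τ : Equiv.Perm (Fin n)) : Finset ℕ :=
  (Finset.Icc 1 (n - 1)).filter fun i =>
    permEntry n τ (i - 1) < permEntry n τ i ∧ permEntry n τ (i + 1) < permEntry n τ i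

lemma lpk_eq_card_pks (n : ℕ) (τ : Equiv.Perm (Fin n)) : leftPeakCount n τ = (pks n τ).card := rfl

lemma pe_le (n : ℕ) (τ : Equiv.Perm (Fin n)) (i : ℕ) : permEntry n τ i ≤ n := by
  unfold permEntry
  split
  · have := (τ ⟨i - 1, by omega⟩).isLt; omega
  · omega

lemma pks_subset (n : ℕ) (τ : Equiv.Perm (Fin n)) : pks n τ ⊆ Finset.Icc 1 (n - 1) :=
  Finset.filter_subset _ _

lemma pks_nonadj (n : ℕ) (τ : Equiv.Perm (Fin n)) (i : ℕ) (h : i ∈ pks n τ) :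
    i + 1 ∉ pks n τ := by
  intro h'
  rw [pks, Finset.mem_filter] at h h'
  simp only [Nat.add_sub_cancel] at h'
  omega

lemma two_mul_lpk_le (n : ℕ) (τ : Equiv.Perm (Fin n)) : 2 * leftPeakCount n τ ≤ n := by
  rw [lpk_eq_card_pks]
  have hsub : (pks n τ).biUnion (fun i => {i - 1, i}) ⊆ Finset.range n := by
    intro x hx
    simp only [Finset.mem_biUnion, Finset.mem_insert, Finset.mem_singleton] at hx
    obtain ⟨i, hi, hx⟩ := hx
    have := pks_subset n τ hi
    simp only [Finset.mem_Icc] at this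
    simp only [Finset.mem_range]
    omega
  have hcard : ((pks n τ).biUnion (fun i => {i - 1, i})).card = 2 * (pks n τ).card := by
    rw [Finset.card_biUnion]
    · rw [Finset.sum_congr rfl (g := fun _ => 2), Finset.sum_const, smul_eq_mul, mul_comm]
      intro i hi
      have := pks_subset n τ hi
      simp only [Finset.mem_Icc] at this
      rw [Finset.card_insert_of_notMem (by simp; omega), Finset.card_singleton]
    · intro a ha b hb hab
      have hna := pks_nonadj n τ a ha
      have hnb := pks_nonadj n τ b hb
      have h2 : a + 1 ≠ b ∧ b + 1 ≠ a := by
        constructor <;> rintro rfl <;> [exact hna hb; exact hnb ha]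
      have ha1 := pks_subset n τ ha; have hb1 := pks_subset n τ hb
      simp only [Finset.mem_Icc] at ha1 hb1
      simp only [Finset.disjoint_left, Finset.mem_insert, Finset.mem_singleton]
      rintro x hx hx'
      rcases hx with rfl | rfl <;> rcases hx' with h | h <;> omega
  calc 2 * (pks n τ).card = _ := hcard.symm
    _ ≤ (Finset.range n).card := Finset.card_le_card hsub
    _ = n := Finset.card_range n

/-- peak predicate characterization for the inserted permutation -/
lemma Q_iff (n : ℕ) (τ : Equiv.Perm (Fin n)) (j : Fin (n+1)) (i : ℕ)
    (hi1 : 1 ≤ i) (hi2 : i ≤ n) :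
    (permEntry (n+1) (ins n τ j) (i-1) < permEntry (n+1) (ins n τ j) i ∧
      permEntry (n+1) (ins n τ j) (i+1) < permEntry (n+1) (ins n τ j) i) ↔
    ((i + 2 ≤ (j : ℕ) + 1 ∧
        (permEntry n τ (i-1) < permEntry n τ i ∧ permEntry n τ (i+1) < permEntry n τ i)) ∨
      i = (j : ℕ) + 1 ∨
      ((j : ℕ) + 3 ≤ i ∧
        (permEntry n τ (i-1-1) < permEntry n τ (i-1) ∧ permEntry n τ i < permEntry n τ (i-1)))) := by
  have e1 := pe_le n τ (i-1-1)
  have e2 := pe_le n τ (i-1)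
  have e3 := pe_le n τ i
  have e4 := pe_le n τ (i+1)
  simp only [pe_ins, Nat.add_sub_cancel]
  split_ifs <;> omega

lemma pks_ins (n : ℕ) (τ : Equiv.Perm (Fin n)) (j : Fin (n+1)) :
    pks (n+1) (ins n τ j) =
      ((pks n τ).filter (fun a => a + 2 ≤ (j : ℕ) + 1) ∪
        (if (j : ℕ) + 1 ≤ n then {(j : ℕ) + 1} else ∅)) ∪
      ((pks n τ).filter (fun a => (j : ℕ) + 2 ≤ a)).image (· + 1) := by
  ext i
  simp only [pks, Finset.mem_filter, Finset.mem_Icc, Finset.mem_union, Finset.mem_image,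
    Nat.add_sub_cancel]
  constructor
  · rintro ⟨⟨hi1, hi2⟩, hQ⟩
    rw [Q_iff n τ j i hi1 hi2] at hQ
    rcases hQ with ⟨hle, hp⟩ | heq | ⟨hge, hp⟩
    · left; left
      have hj := j.isLt
      exact ⟨⟨⟨hi1, by omega⟩, hp⟩, hle⟩
    · left; right
      rw [if_pos (by omega)]
      simp [heq]
    · right
      refine ⟨i - 1, ⟨⟨⟨by omega, by omega⟩, ?_⟩, by omega⟩, by omega⟩
      rw [Nat.sub_add_cancel (by omega : 1 ≤ i)]
      exact hp
  · rintro (⟨⟨⟨⟨ha1, ha2⟩, hp⟩, hle⟩ | hmem⟩ | ⟨a, ⟨⟨⟨ha1, ha2⟩, hp⟩, hge⟩, rfl⟩)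
    · have hj := j.isLt
      refine ⟨⟨ha1, by omega⟩, ?_⟩
      rw [Q_iff n τ j i ha1 (by omega)]
      exact Or.inl ⟨hle, hp⟩
    · rcases le_or_gt ((j : ℕ) + 1) n with hc | hc
      · rw [if_pos hc] at hmem
        simp only [Finset.mem_singleton] at hmem
        subst hmem
        refine ⟨⟨by omega, hc⟩, ?_⟩
        rw [Q_iff n τ j _ (by omega) hc]
        exact Or.inr (Or.inl rfl)
      · rw [if_neg (by omega)] at hmem
        exact absurd hmem (Finset.notMem_empty _)
    · refine ⟨⟨by omega, by omega⟩, ?_⟩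
      rw [Q_iff n τ j (a+1) (by omega) (by omega)]
      refine Or.inr (Or.inr ⟨by omega, ?_⟩)
      simpa using hp

lemma lpk_ins (n : ℕ) (τ : Equiv.Perm (Fin n)) (j : Fin (n+1)) :
    leftPeakCount (n+1) (ins n τ j) =
      if ((j : ℕ) + 1 ≤ n ∧ (j : ℕ) ∉ pks n τ ∧ (j : ℕ) + 1 ∉ pks n τ)
      then leftPeakCount n τ + 1 else leftPeakCount n τ := by
  classical
  set P := pks n τ with hP
  set J := (j : ℕ) + 1 with hJ
  have hPsub : ∀ a ∈ P, 1 ≤ a ∧ a ≤ n - 1 := by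
    intro a ha
    have := pks_subset n τ ha
    simpa using this
  -- cardinality of the decomposition
  rw [lpk_eq_card_pks, pks_ins]
  have hd1 : Disjoint (P.filter (fun a => a + 2 ≤ J) ∪ (if J ≤ n then {J} else ∅))
      ((P.filter (fun a => J + 1 ≤ a)).image (· + 1)) := by
    simp only [Finset.disjoint_left, Finset.mem_union, Finset.mem_filter, Finset.mem_image]
    rintro x (⟨-, hx⟩ | hx) ⟨a, ⟨-, ha⟩, rfl⟩
    · omega
    · rcases le_or_gt J n with hc | hc
      · rw [if_pos hc] at hx; simp at hx; omega
      · rw [if_neg (by omega)] at hx; exact absurd hx (Finset.notMem_empty _)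
  have hd2 : Disjoint (P.filter (fun a => a + 2 ≤ J)) (if J ≤ n then {J} else ∅) := by
    simp only [Finset.disjoint_left, Finset.mem_filter]
    rintro x ⟨-, hx⟩ hx'
    rcases le_or_gt J n with hc | hc
    · rw [if_pos hc] at hx'; simp at hx'; omega
    · rw [if_neg (by omega)] at hx'; exact absurd hx' (Finset.notMem_empty _)
  have hJ2 : (j : ℕ) + 2 = J + 1 := by omega
  rw [hJ2, Finset.card_union_of_disjoint hd1, Finset.card_union_of_disjoint hd2,
    Finset.card_image_of_injective _ (add_left_injective 1)]
  -- partition of P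
  have hpart : (P.filter (fun a => a + 2 ≤ J)).card + (P.filter (fun a => J + 1 ≤ a)).card
      + (P.filter (fun a => J ≤ a + 1 ∧ a ≤ J)).card = P.card := by
    have h1 : P.filter (fun a => a + 2 ≤ J) ∪ P.filter (fun a => J + 1 ≤ a)
        ∪ P.filter (fun a => J ≤ a + 1 ∧ a ≤ J) = P := by
      ext a
      simp only [Finset.mem_union, Finset.mem_filter]
      constructor
      · rintro ((⟨h, -⟩ | ⟨h, -⟩) | ⟨h, -⟩) <;> exact h
      · intro h
        rcases Nat.lt_trichotomy (a + 1) J with hc | hc | hc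
        · exact Or.inl (Or.inl ⟨h, by omega⟩)
        · exact Or.inr ⟨h, by omega⟩
        · rcases le_or_gt a J with hc2 | hc2
          · exact Or.inr ⟨h, by omega⟩
          · exact Or.inl (Or.inr ⟨h, by omega⟩)
    have hd3 : Disjoint (P.filter (fun a => a + 2 ≤ J) ∪ P.filter (fun a => J + 1 ≤ a))
        (P.filter (fun a => J ≤ a + 1 ∧ a ≤ J)) := by
      simp only [Finset.disjoint_left, Finset.mem_union, Finset.mem_filter]
      rintro x (⟨-, hx⟩ | ⟨-, hx⟩) ⟨-, hx'⟩ <;> omega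
    have hd4 : Disjoint (P.filter (fun a => a + 2 ≤ J)) (P.filter (fun a => J + 1 ≤ a)) := by
      simp only [Finset.disjoint_left, Finset.mem_filter]
      rintro x ⟨-, hx⟩ ⟨-, hx'⟩; omega
    rw [← Finset.card_union_of_disjoint hd4, ← Finset.card_union_of_disjoint hd3, h1]
  rw [lpk_eq_card_pks, ← hP]
  by_cases hgood : J ≤ n ∧ (j : ℕ) ∉ P ∧ J ∉ P
  · rw [if_pos hgood]
    have hmid : P.filter (fun a => J ≤ a + 1 ∧ a ≤ J) = ∅ := by
      rw [Finset.filter_eq_empty_iff]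
      intro a ha ⟨h1, h2⟩
      have : a = (j : ℕ) ∨ a = J := by omega
      rcases this with rfl | rfl
      · exact hgood.2.1 ha
      · exact hgood.2.2 ha
    rw [if_pos hgood.1]
    rw [hmid, Finset.card_empty] at hpart
    simp only [Finset.card_singleton]
    omega
  · rcases le_or_gt J n with hc | hc
    · rw [if_pos hc, if_neg hgood]
      -- some a in {j, J} is in P ; mid filter has card 1
      have hbad : (j : ℕ) ∈ P ∨ J ∈ P := by
        by_contra hcon
        push_neg at hcon
        exact hgood ⟨hc, hcon.1, hcon.2⟩
      have hmid : P.filter (fun a => J ≤ a + 1 ∧ a ≤ J) =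
          if (j : ℕ) ∈ P then {(j : ℕ)} else {J} := by
        split_ifs with hjP
        · ext a
          simp only [Finset.mem_filter, Finset.mem_singleton]
          constructor
          · rintro ⟨ha, h1, h2⟩
            have : a = (j : ℕ) ∨ a = J := by omega
            rcases this with rfl | rfl
            · rfl
            · exact absurd ha (by simpa [hJ] using pks_nonadj n τ (j : ℕ) hjP)
          · rintro rfl; exact ⟨hjP, by omega, by omega⟩
        · have hJP : J ∈ P := hbad.resolve_left hjP
          ext a
          simp only [Finset.mem_filter, Finset.mem_singleton]
          constructor
          · rintro ⟨ha, h1, h2⟩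
            have : a = (j : ℕ) ∨ a = J := by omega
            rcases this with rfl | rfl
            · exact absurd ha hjP
            · rfl
          · rintro rfl; exact ⟨hJP, by omega, by omega⟩
      have : (P.filter (fun a => J ≤ a + 1 ∧ a ≤ J)).card = 1 := by
        rw [hmid]; split_ifs <;> simp
      simp only [Finset.card_singleton]
      omega
    · rw [if_neg (by omega), if_neg hgood]
      have hmid : P.filter (fun a => J ≤ a + 1 ∧ a ≤ J) = ∅ := by
        rw [Finset.filter_eq_empty_iff]
        intro a ha ⟨h1, h2⟩
        have := hPsub a ha
        omega
      rw [hmid, Finset.card_empty] at hpart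
      simp only [Finset.card_empty]
      omega

lemma card_good (n : ℕ) (τ : Equiv.Perm (Fin n)) :
    (Finset.univ.filter (fun j : Fin (n+1) =>
      (j : ℕ) + 1 ≤ n ∧ (j : ℕ) ∉ pks n τ ∧ (j : ℕ) + 1 ∉ pks n τ)).card
      = n - 2 * leftPeakCount n τ := by
  classical
  set P := pks n τ with hP
  have hPsub : ∀ a ∈ P, 1 ≤ a ∧ a ≤ n - 1 := by
    intro a ha; have := pks_subset n τ ha; simpa using this
  -- transfer to a subset of range n
  have hbij : (Finset.univ.filter (fun j : Fin (n+1) =>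
      (j : ℕ) + 1 ≤ n ∧ (j : ℕ) ∉ P ∧ (j : ℕ) + 1 ∉ P)).card
      = ((Finset.range n).filter (fun a => ¬(a ∈ P ∨ a + 1 ∈ P))).card := by
    refine Finset.card_bij (fun j _ => (j : ℕ)) ?_ ?_ ?_
    · intro j hj
      simp only [Finset.mem_filter, Finset.mem_univ, true_and] at hj
      simp only [Finset.mem_filter, Finset.mem_range]
      constructor
      · omega
      · push_neg
        exact ⟨hj.2.1, hj.2.2⟩
    · intro j _ j' _ h
      exact Fin.ext h
    · intro a ha
      simp only [Finset.mem_filter, Finset.mem_range] at ha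
      push_neg at ha
      refine ⟨⟨a, by omega⟩, ?_, rfl⟩
      simp only [Finset.mem_filter, Finset.mem_univ, true_and]
      exact ⟨by omega, ha.2.1, ha.2.2⟩
  rw [hbij]
  have hbadset : (Finset.range n).filter (fun a => a ∈ P ∨ a + 1 ∈ P)
      = P ∪ P.image (fun p => p - 1) := by
    ext a
    simp only [Finset.mem_filter, Finset.mem_range, Finset.mem_union, Finset.mem_image]
    constructor
    · rintro ⟨ha, h | h⟩
      · exact Or.inl h
      · exact Or.inr ⟨a + 1, h, by omega⟩
    · rintro (h | ⟨p, hp, rfl⟩)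
      · have := hPsub a h; exact ⟨by omega, Or.inl h⟩
      · have := hPsub p hp
        refine ⟨by omega, Or.inr ?_⟩
        have : p - 1 + 1 = p := by omega
        rw [this]; exact hp
  have hbadcard : ((Finset.range n).filter (fun a => a ∈ P ∨ a + 1 ∈ P)).card
      = 2 * leftPeakCount n τ := by
    rw [hbadset, Finset.card_union_of_disjoint, Finset.card_image_of_injOn]
    · rw [lpk_eq_card_pks, ← hP]; ring
    · intro p hp q hq h
      simp only at h
      have := hPsub p (Finset.mem_coe.mp hp); have := hPsub q (Finset.mem_coe.mp hq)
      omega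
    · simp only [Finset.disjoint_left, Finset.mem_image]
      rintro x hx ⟨p, hp, rfl⟩
      have h1 := hPsub p hp
      have he : p - 1 + 1 = p := by omega
      have h2 := pks_nonadj n τ (p - 1) hx
      rw [he] at h2
      exact h2 hp
  have key : ((Finset.range n).filter (fun a => a ∈ P ∨ a + 1 ∈ P)).card
      + ((Finset.range n).filter (fun a => ¬(a ∈ P ∨ a + 1 ∈ P))).card = n := by
    simpa using Finset.card_filter_add_card_filter_not
      (s := Finset.range n) (p := fun a => a ∈ P ∨ a + 1 ∈ P)
  omega

noncomputable def w (m k : ℕ) : MvPolynomial (Fin 2) ℚ := X 0 ^ (2*k+1) * X 1 ^ (m - 2*k)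

noncomputable def Dp (p : MvPolynomial (Fin 2) ℚ) : MvPolynomial (Fin 2) ℚ :=
  X 0 * X 1 * pderiv 0 p + X 0 ^ 2 * pderiv 1 p

lemma Dp_w (n k : ℕ) (h : 2*k ≤ n) :
    Dp (w n k) = (2*k+1 : ℕ) • w (n+1) k + (n - 2*k : ℕ) • w (n+1) (k+1) := by
  have h01 : (0 : Fin 2) ≠ 1 := by decide
  have h10 : (1 : Fin 2) ≠ 0 := by decide
  simp only [Dp, w, pderiv_mul, pderiv_pow, pderiv_X_self, pderiv_X_of_ne h10,
    pderiv_X_of_ne h01]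
  have e1 : (n + 1) - 2*k = (n - 2*k) + 1 := by omega
  have e2 : (n + 1) - 2*(k+1) = (n - 2*k) - 1 := by omega
  rw [e1, e2]
  rcases Nat.eq_zero_or_pos (n - 2*k) with hz | hpos
  · rw [hz]
    have e4 : 2*k+1-1 = 2*k := by omega
    simp only [pow_zero, zero_smul, nsmul_eq_mul, e4]
    push_cast
    ring
  · have e3 : n - 2*k = ((n - 2*k) - 1) + 1 := by omega
    have e4 : 2*k+1-1 = 2*k := by omega
    simp only [nsmul_eq_mul, e4]
    rw [e3]
    push_cast
    ring

lemma Dp_sum {α : Type*} (s : Finset α) (f : α → MvPolynomial (Fin 2) ℚ) :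
    Dp (∑ x ∈ s, f x) = ∑ x ∈ s, Dp (f x) := by
  simp only [Dp, map_sum, Finset.mul_sum, ← Finset.sum_add_distrib]

lemma Lb_eq_sum (m : ℕ) : Lb m = ∑ σ : Equiv.Perm (Fin m), w m (leftPeakCount m σ) := by
  classical
  rw [← Finset.sum_fiberwise_of_maps_to (g := fun σ => leftPeakCount m σ)
    (t := Finset.range (m/2 + 1)) (fun σ _ => by
      have := two_mul_lpk_le m σ
      simp only [Finset.mem_range]
      omega)]
  unfold Lb
  refine Finset.sum_congr rfl fun k _ => ?_
  rw [Finset.sum_congr rfl (g := fun _ => w m k) (fun σ hσ => by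
    simp only [Finset.mem_filter] at hσ
    rw [hσ.2])]
  rw [Finset.sum_const, leftPeakNum, nsmul_eq_mul, w, mul_assoc]

lemma Lb_zero : Lb 0 = X 0 := by
  rw [Lb_eq_sum]
  rw [Finset.sum_congr rfl (g := fun _ => (X 0 : MvPolynomial (Fin 2) ℚ)) (fun σ _ => by
    have : leftPeakCount 0 σ = 0 := by simp [leftPeakCount]
    rw [this, w]
    simp)]
  rw [Finset.sum_const]
  have : Fintype.card (Equiv.Perm (Fin 0)) = 1 := by simp [Fintype.card_perm]
  simp [this]

lemma Lb_succ (n : ℕ) : Lb (n+1) = Dp (Lb n) := by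
  classical
  rw [Lb_eq_sum, Lb_eq_sum, Dp_sum]
  rw [← Fintype.sum_bijective _ (ins_bijective n) _
    (fun σ => w (n+1) (leftPeakCount (n+1) σ)) (fun _ => rfl)]
  rw [Fintype.sum_prod_type]
  refine Finset.sum_congr rfl fun τ _ => ?_
  set k := leftPeakCount n τ with hk
  have h2k : 2 * k ≤ n := two_mul_lpk_le n τ
  have hsum : ∑ j : Fin (n+1), w (n+1) (leftPeakCount (n+1) (ins n τ j))
      = (n - 2*k) • w (n+1) (k+1) + (2*k+1) • w (n+1) k := by
    rw [Finset.sum_congr rfl (g := fun j : Fin (n+1) => if ((j : ℕ) + 1 ≤ n ∧ (j : ℕ) ∉ pks n τ ∧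
        (j : ℕ) + 1 ∉ pks n τ) then w (n+1) (k+1) else w (n+1) k)
      (fun j _ => by rw [lpk_ins, apply_ite (w (n+1))])]
    rw [Finset.sum_ite, Finset.sum_const, Finset.sum_const, card_good]
    congr 1
    have key := Finset.card_filter_add_card_filter_not
      (s := (Finset.univ : Finset (Fin (n+1)))) (p := fun j : Fin (n+1) =>
        (j : ℕ) + 1 ≤ n ∧ (j : ℕ) ∉ pks n τ ∧ (j : ℕ) + 1 ∉ pks n τ)
    rw [card_good, Finset.card_univ, Fintype.card_fin] at key
    have : (Finset.univ.filter (fun j : Fin (n+1) => ¬((j : ℕ) + 1 ≤ n ∧ (j : ℕ) ∉ pks n τ ∧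
        (j : ℕ) + 1 ∉ pks n τ))).card = 2*k+1 := by omega
    rw [this]
  rw [hsum, Dp_w n k h2k, add_comm]

noncomputable def ab (b : ℕ) : MvPolynomial (Fin 2) ℚ :=
  if Even b then (X 1 ^ 2 - X 0 ^ 2) ^ (b / 2) else -(X 1 * (X 1 ^ 2 - X 0 ^ 2) ^ (b / 2))

noncomputable def Sb (N : ℕ) : MvPolynomial (Fin 2) ℚ :=
  ∑ b ∈ Finset.range (N + 1), (N.choose b) • (Lb (N - b) * ab b)

lemma Dp_zero : Dp 0 = 0 := by simp [Dp]

lemma Dp_nsmul (c : ℕ) (p : MvPolynomial (Fin 2) ℚ) : Dp (c • p) = c • Dp p := by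
  simp only [Dp, map_nsmul, smul_add, mul_smul_comm]

lemma Dp_mul (p q : MvPolynomial (Fin 2) ℚ) : Dp (p * q) = Dp p * q + p * Dp q := by
  simp only [Dp, pderiv_mul]
  ring

lemma Dp_u_pow (m : ℕ) : Dp ((X 1 ^ 2 - X 0 ^ 2 : MvPolynomial (Fin 2) ℚ) ^ m) = 0 := by
  have h01 : (0 : Fin 2) ≠ 1 := by decide
  have h10 : (1 : Fin 2) ≠ 0 := by decide
  simp only [Dp, pderiv_pow, map_sub, pderiv_pow, pderiv_X_self, pderiv_X_of_ne h10,
    pderiv_X_of_ne h01]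
  ring

lemma Dp_X1 : Dp (X 1 : MvPolynomial (Fin 2) ℚ) = X 0 ^ 2 := by
  have h10 : (1 : Fin 2) ≠ 0 := by decide
  simp [Dp, pderiv_X_self, pderiv_X_of_ne h10]

lemma Dp_neg (p : MvPolynomial (Fin 2) ℚ) : Dp (-p) = -Dp p := by
  simp [Dp]; ring

lemma ab_succ (b : ℕ) : ab (b + 1) = Dp (ab b) - X 1 * ab b := by
  rcases Nat.even_or_odd b with ⟨j, rfl⟩ | ⟨j, rfl⟩
  · have he : Even (j + j) := ⟨j, rfl⟩
    have hno : ¬ Even (j + j + 1) := by simp [Nat.even_add_one, he]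
    have hd1 : (j + j) / 2 = j := by omega
    have hd2 : (j + j + 1) / 2 = j := by omega
    rw [ab, ab, if_pos he, if_neg hno, hd1, hd2, Dp_u_pow]
    ring
  · have hno : ¬ Even (2 * j + 1) := by simp [Nat.even_add_one]
    have he : Even (2 * j + 1 + 1) := by refine ⟨j + 1, by omega⟩
    have hd1 : (2 * j + 1) / 2 = j := by omega
    have hd2 : (2 * j + 1 + 1) / 2 = j + 1 := by omega
    rw [ab, ab, if_neg hno, if_pos he, hd1, hd2]
    have hDp : Dp (-(X 1 * (X 1 ^ 2 - X 0 ^ 2) ^ j) : MvPolynomial (Fin 2) ℚ)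
        = -(X 0 ^ 2 * (X 1 ^ 2 - X 0 ^ 2) ^ j) := by
      rw [Dp_neg, Dp_mul, Dp_X1, Dp_u_pow]
      ring
    rw [hDp]
    ring

lemma Sb_succ (N : ℕ) : Sb (N + 1) = Dp (Sb N) - X 1 * Sb N := by
  have h1 : ∀ b, (N + 1).choose (b + 1) = N.choose b + N.choose (b + 1) :=
    fun b => Nat.choose_succ_succ N b
  have h5 : ∀ b, N + 1 - (b + 1) = N - b := fun b => by omega
  have hsplit : Sb (N + 1)
      = ∑ b ∈ Finset.range (N + 1), (N.choose b) • (Lb (N + 1 - b) * ab b)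
      + ∑ b ∈ Finset.range (N + 1), (N.choose b) • (Lb (N - b) * ab (b + 1)) := by
    rw [Sb, Finset.sum_range_succ' (fun b => ((N+1).choose b) • (Lb (N + 1 - b) * ab b)) (N+1)]
    simp only [h1, add_smul, h5]
    rw [Finset.sum_add_distrib]
    have h2 : ∑ b ∈ Finset.range (N + 1), (N.choose (b + 1)) • (Lb (N - b) * ab (b + 1))
        + ((N + 1).choose 0) • (Lb (N + 1 - 0) * ab 0)
        = ∑ b ∈ Finset.range (N + 1), (N.choose b) • (Lb (N + 1 - b) * ab b) := by
      have e0 : ((N+1).choose 0) • (Lb (N + 1 - 0) * ab 0)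
          = (N.choose 0) • (Lb (N + 1 - 0) * ab 0) := by norm_num
      rw [e0]
      have hrs := Finset.sum_range_succ' (fun b => (N.choose b) • (Lb (N + 1 - b) * ab b)) (N+1)
      simp only [h5] at hrs
      rw [← hrs, Finset.sum_range_succ]
      simp [Nat.choose_succ_self]
    linear_combination h2
  rw [hsplit, Sb, Dp_sum, Finset.mul_sum, ← Finset.sum_sub_distrib, ← Finset.sum_add_distrib]
  refine Finset.sum_congr rfl fun b hb => ?_
  simp only [Finset.mem_range] at hb
  have hL : Lb (N + 1 - b) = Dp (Lb (N - b)) := by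
    have he : N + 1 - b = (N - b) + 1 := by omega
    rw [he, Lb_succ]
  rw [hL, Dp_nsmul, Dp_mul, ab_succ]
  simp only [nsmul_eq_mul]
  ring

lemma Sb_zero : Sb 0 = X 0 := by
  rw [Sb]
  simp [Lb_zero, ab]

lemma Sb_one : Sb 1 = 0 := by
  have := Sb_succ 0
  rw [Sb_zero] at this
  rw [this, Dp]
  have h10 : (1 : Fin 2) ≠ 0 := by decide
  have h01 : (0 : Fin 2) ≠ 1 := by decide
  simp [pderiv_X_self, pderiv_X_of_ne h10, pderiv_X_of_ne h01]
  ring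

lemma Sb_eq_zero (N : ℕ) (h : 1 ≤ N) : Sb N = 0 := by
  induction N with
  | zero => omega
  | succ M ih =>
    rcases Nat.eq_zero_or_pos M with rfl | hM
    · exact Sb_one
    · rw [Sb_succ, ih hM, Dp_zero]
      ring

/-- in `ℚ[x,y][[t]]`,
`(Σ_{n≥0} L_n(x,y)·tⁿ/n!) · (Σ_{n≥0} (y²−x²)ⁿ·t^{2n}/(2n)! − y·Σ_{n≥0} (y²−x²)ⁿ·t^{2n+1}/(2n+1)!) = x`. -/
theorem stmt_9 :
    (PowerSeries.mk fun n => ((n.factorial : ℚ))⁻¹ • Lb n) *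
      (PowerSeries.mk fun m =>
        if Even m then
          ((m.factorial : ℚ))⁻¹ • (((X 1 ^ 2 - X 0 ^ 2) ^ (m / 2) : MvPolynomial (Fin 2) ℚ))
        else
          -(((m.factorial : ℚ))⁻¹ • (X 1 * (X 1 ^ 2 - X 0 ^ 2) ^ (m / 2))))
      = PowerSeries.C (X 0) := by
  ext N
  rw [PowerSeries.coeff_mul, PowerSeries.coeff_C]
  simp only [PowerSeries.coeff_mk]
  have hterm : ∀ a b : ℕ,
      ((a.factorial : ℚ))⁻¹ • Lb a *
        (if Even b then
          ((b.factorial : ℚ))⁻¹ • (((X 1 ^ 2 - X 0 ^ 2) ^ (b / 2) : MvPolynomial (Fin 2) ℚ))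
        else -(((b.factorial : ℚ))⁻¹ • (X 1 * (X 1 ^ 2 - X 0 ^ 2) ^ (b / 2))))
      = ((a.factorial : ℚ)⁻¹ * (b.factorial : ℚ)⁻¹) • (Lb a * ab b) := by
    intro a b
    rw [ab]
    split_ifs with h
    · rw [smul_mul_smul_comm]
    · rw [mul_neg, smul_mul_smul_comm, mul_neg, smul_neg]
  rw [Finset.sum_congr rfl (fun p _ => hterm p.1 p.2)]
  rw [Finset.Nat.sum_antidiagonal_eq_sum_range_succ
    (fun a b => ((a.factorial : ℚ)⁻¹ * (b.factorial : ℚ)⁻¹) • (Lb a * ab b)) N]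
  rw [← Finset.sum_range_reflect]
  simp only [Nat.succ_sub_one]
  have hsum : ∑ j ∈ Finset.range (N + 1),
      (((N - j).factorial : ℚ)⁻¹ * ((N - (N - j)).factorial : ℚ)⁻¹) • (Lb (N - j) * ab (N - (N - j)))
      = (N.factorial : ℚ)⁻¹ • Sb N := by
    rw [Sb, Finset.smul_sum]
    refine Finset.sum_congr rfl fun j hj => ?_
    simp only [Finset.mem_range] at hj
    have hjN : j ≤ N := by omega
    have e1 : N - (N - j) = j := by omega
    rw [e1]
    have hfact : ((N - j).factorial : ℚ)⁻¹ * (j.factorial : ℚ)⁻¹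
        = (N.factorial : ℚ)⁻¹ * (N.choose j : ℚ) := by
      have hNf : (N.choose j) * j.factorial * (N - j).factorial = N.factorial :=
        Nat.choose_mul_factorial_mul_factorial hjN
      have h1 : ((N - j).factorial : ℚ) ≠ 0 := Nat.cast_ne_zero.mpr (Nat.factorial_ne_zero _)
      have h2 : ((j).factorial : ℚ) ≠ 0 := Nat.cast_ne_zero.mpr (Nat.factorial_ne_zero _)
      have h3 : ((N).factorial : ℚ) ≠ 0 := Nat.cast_ne_zero.mpr (Nat.factorial_ne_zero _)
      field_simp
      rw [← Nat.cast_mul, ← Nat.cast_mul, ← hNf]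
      push_cast
      ring
    rw [hfact, mul_smul, Nat.cast_smul_eq_nsmul]
  rw [hsum]
  split_ifs with hN
  · subst hN
    rw [Sb_zero]
    simp
  · rw [Sb_eq_zero N (by omega), smul_zero]
end

section
/- Let D be the unique derivation of the field of rational functions ℚ(x,y) extending the derivation of ℚ[x,y] determined by D(x) = x·y and D(y) = x². Then for every n ≥ 0, D^{2n}(x^{−1}y) = x^{−1}·y·(y² − x²)ⁿ and D^{2n+1}(x^{−1}y) = −x^{−1}·(y² − x²)^{n+1}. -/
open MvPolynomial

/-- The field of rational functions `ℚ(x,y)`. -/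
noncomputable abbrev QXY := FractionRing (MvPolynomial (Fin 2) ℚ)

/-- The canonical embedding `ℚ[x,y] → ℚ(x,y)`. -/
noncomputable def ι : MvPolynomial (Fin 2) ℚ →+* QXY := algebraMap _ _

/-- for the derivation of `ℚ(x,y)` extending `D x = x·y`, `D y = x²`,
`D^{2n}(x⁻¹y) = x⁻¹·y·(y² − x²)ⁿ` and `D^{2n+1}(x⁻¹y) = −x⁻¹·(y² − x²)^{n+1}`. -/
theorem stmt_10 (D : Derivation ℚ QXY QXY)
    (hx : D (ι (X 0)) = ι (X 0 * X 1)) (hy : D (ι (X 1)) = ι (X 0 ^ 2)) (n : ℕ) :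
    (⇑D)^[2 * n] ((ι (X 0))⁻¹ * ι (X 1))
        = (ι (X 0))⁻¹ * ι (X 1) * (ι (X 1) ^ 2 - ι (X 0) ^ 2) ^ n ∧
      (⇑D)^[2 * n + 1] ((ι (X 0))⁻¹ * ι (X 1))
        = -((ι (X 0))⁻¹ * (ι (X 1) ^ 2 - ι (X 0) ^ 2) ^ (n + 1)) := by
  set x := ι (X 0) with hxdef
  set y := ι (X 1) with hydef
  rw [map_mul] at hx
  rw [map_pow] at hy
  have hxne : x ≠ 0 := by
    rw [hxdef]
    intro h
    exact MvPolynomial.X_ne_zero 0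
      (IsFractionRing.injective (MvPolynomial (Fin 2) ℚ) QXY (by rw [map_zero]; exact h))
  have hDinv : D x⁻¹ = -(x⁻¹ ^ 2 * (x * y)) := by
    rw [Derivation.leibniz_inv, hx]; simp [smul_eq_mul]; exact Or.inl rfl
  have hDw : D (y ^ 2 - x ^ 2) = 0 := by
    rw [map_sub, Derivation.leibniz_pow, Derivation.leibniz_pow, hx, hy]
    simp [smul_eq_mul]; ring
  have hDwn : ∀ m : ℕ, D ((y ^ 2 - x ^ 2) ^ m) = 0 := by
    intro m
    rw [Derivation.leibniz_pow, hDw]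
    simp
  have hDu : D (x⁻¹ * y) = -(x⁻¹ * (y ^ 2 - x ^ 2)) := by
    rw [Derivation.leibniz, hDinv, hy, smul_eq_mul, smul_eq_mul]
    field_simp
    ring
  induction n with
  | zero =>
    refine ⟨by simp, ?_⟩
    simpa using hDu
  | succ n ih =>
    obtain ⟨ih1, ih2⟩ := ih
    have h1 : (⇑D)^[2 * (n + 1)] (x⁻¹ * y) = x⁻¹ * y * (y ^ 2 - x ^ 2) ^ (n + 1) := by
      have h : 2 * (n + 1) = (2 * n + 1) + 1 := by ring
      rw [h, Function.iterate_succ_apply', ih2, map_neg, Derivation.leibniz, hDwn, hDinv]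
      field_simp
      linear_combination (y ^ 3 * (-x ^ 2 + y ^ 2) ^ n - x ^ 2 * y * (-x ^ 2 + y ^ 2) ^ n) * mul_inv_cancel₀ hxne
    refine ⟨h1, ?_⟩
    rw [Function.iterate_succ_apply', h1, Derivation.leibniz, hDwn, hDu]
    field_simp
    linear_combination (-y ^ 4 + 2 * x ^ 2 * y ^ 2 - x ^ 4) * (-x ^ 2 + y ^ 2) ^ n * mul_inv_cancel₀ hxne
end

section
/- In the formal power series ring ℚ[x][[t]], the exponential generating function of the left peak polynomials is the formal exponential of the integrated exponential generating function of the exterior peak polynomials: Σ_{n≥0} L_n(x)·tⁿ/n! = Σ_{m≥0} (1/m!)·(Σ_{n≥0} W_n(x)·t^{n+1}/(n+1)!)^m. -/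
open MvPolynomial

/-- The univariate left peak polynomial `L_n(x) = Σ_k L(n,k)·x^k`. -/
noncomputable def LpolyQ (n : ℕ) : Polynomial ℚ :=
  ∑ k ∈ Finset.range (n + 1), (leftPeakNum n k : Polynomial ℚ) * Polynomial.X ^ k

/-- The univariate exterior peak polynomial `W_n(x) = Σ_k W(n,k)·x^k`. -/
noncomputable def WpolyQ (n : ℕ) : Polynomial ℚ :=
  ∑ k ∈ Finset.range (n + 1), (extPeakNum n k : Polynomial ℚ) * Polynomial.X ^ k

/-- `Σ_{n≥0} W_n(x)·t^{n+1}/(n+1)!`, an element of `ℚ[x][[t]]` with zero constant term. -/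
noncomputable def WegfInt : PowerSeries (Polynomial ℚ) :=
  PowerSeries.mk fun m => if m = 0 then 0 else ((m.factorial : ℚ))⁻¹ • WpolyQ (m - 1)

variable {n j : ℕ}

lemma compl_card (hj : j ≤ n) (S : Finset (Fin n)) (hS : S.card = j) : Sᶜ.card = n - j := by
  rw [Finset.card_compl, hS, Fintype.card_fin]

def buildFun (hj : j ≤ n) (S : Finset (Fin n)) (hS : S.card = j)
    (α : Equiv.Perm (Fin j)) (β : Equiv.Perm (Fin (n - j))) (i : Fin (n + 1)) : Fin (n + 1) :=
  if h : (i : ℕ) < j then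
    ⟨((S.orderIsoOfFin hS (α ⟨i, h⟩) : Fin n) : ℕ) + 1, by
      have := (S.orderIsoOfFin hS (α ⟨i, h⟩) : Fin n).isLt; omega⟩
  else if h2 : (i : ℕ) = j then ⟨0, by omega⟩
  else
    ⟨((Sᶜ.orderIsoOfFin (compl_card hj S hS) (β ⟨(i : ℕ) - j - 1, by
        have := i.isLt; omega⟩) : Fin n) : ℕ) + 1, by
      have := ((Sᶜ.orderIsoOfFin (compl_card hj S hS) (β ⟨(i : ℕ) - j - 1, by
        have := i.isLt; omega⟩)) : Fin n).isLt; omega⟩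

lemma buildFun_lt (hj : j ≤ n) (S : Finset (Fin n)) (hS : S.card = j)
    (α : Equiv.Perm (Fin j)) (β : Equiv.Perm (Fin (n - j))) (i : Fin (n + 1)) (h : (i : ℕ) < j) :
    buildFun hj S hS α β i = ⟨((S.orderIsoOfFin hS (α ⟨i, h⟩) : Fin n) : ℕ) + 1, by
      have := (S.orderIsoOfFin hS (α ⟨i, h⟩) : Fin n).isLt; omega⟩ := by
  rw [buildFun, dif_pos h]

lemma buildFun_eq (hj : j ≤ n) (S : Finset (Fin n)) (hS : S.card = j)
    (α : Equiv.Perm (Fin j)) (β : Equiv.Perm (Fin (n - j))) (i : Fin (n + 1)) (h : (i : ℕ) = j) :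
    buildFun hj S hS α β i = ⟨0, by omega⟩ := by
  rw [buildFun, dif_neg (by omega), dif_pos h]

lemma buildFun_gt (hj : j ≤ n) (S : Finset (Fin n)) (hS : S.card = j)
    (α : Equiv.Perm (Fin j)) (β : Equiv.Perm (Fin (n - j))) (i : Fin (n + 1)) (h : j < (i : ℕ)) :
    buildFun hj S hS α β i = ⟨((Sᶜ.orderIsoOfFin (compl_card hj S hS) (β ⟨(i : ℕ) - j - 1, by
        have := i.isLt; omega⟩) : Fin n) : ℕ) + 1, by
      have := ((Sᶜ.orderIsoOfFin (compl_card hj S hS) (β ⟨(i : ℕ) - j - 1, by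
        have := i.isLt; omega⟩)) : Fin n).isLt; omega⟩ := by
  rw [buildFun, dif_neg (by omega), dif_neg (by omega)]

lemma buildFun_injective (hj : j ≤ n) (S : Finset (Fin n)) (hS : S.card = j)
    (α : Equiv.Perm (Fin j)) (β : Equiv.Perm (Fin (n - j))) :
    Function.Injective (buildFun hj S hS α β) := by
  intro a b hab
  rcases lt_trichotomy (a : ℕ) j with ha | ha | ha <;> rcases lt_trichotomy (b : ℕ) j with hb | hb | hb
  · rw [buildFun_lt hj S hS α β a ha, buildFun_lt hj S hS α β b hb] at hab
    have h1 : ((S.orderIsoOfFin hS (α ⟨a, ha⟩) : Fin n) : ℕ) = ((S.orderIsoOfFin hS (α ⟨b, hb⟩) : Fin n) : ℕ) := by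
      have := congrArg Fin.val hab; simpa using this
    have h2 : (S.orderIsoOfFin hS (α ⟨a, ha⟩)) = (S.orderIsoOfFin hS (α ⟨b, hb⟩)) := by
      ext; exact h1
    have h3 : α ⟨a, ha⟩ = α ⟨b, hb⟩ := (S.orderIsoOfFin hS).injective h2
    have h4 : (⟨a, ha⟩ : Fin j) = ⟨b, hb⟩ := α.injective h3
    have := congrArg Fin.val h4
    exact Fin.ext this
  · rw [buildFun_lt hj S hS α β a ha, buildFun_eq hj S hS α β b hb] at hab
    have := congrArg Fin.val hab; simp at this
  · rw [buildFun_lt hj S hS α β a ha, buildFun_gt hj S hS α β b hb] at hab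
    have hv := congrArg Fin.val hab
    simp only [] at hv
    have hv2 : ((S.orderIsoOfFin hS (α ⟨a, ha⟩) : Fin n)) = ((Sᶜ.orderIsoOfFin (compl_card hj S hS) (β ⟨(b : ℕ) - j - 1, by have := b.isLt; omega⟩) : Fin n)) := by
      apply Fin.ext
      · omega
    have hmem : ((S.orderIsoOfFin hS (α ⟨a, ha⟩) : Fin n)) ∈ S := (S.orderIsoOfFin hS (α ⟨a, ha⟩)).2
    have hmem2 : ((S.orderIsoOfFin hS (α ⟨a, ha⟩) : Fin n)) ∈ Sᶜ := by
      rw [hv2]; exact (Sᶜ.orderIsoOfFin (compl_card hj S hS) (β ⟨(b : ℕ) - j - 1, by have := b.isLt; omega⟩)).2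
    simp [Finset.mem_compl, hmem] at hmem2
  · rw [buildFun_eq hj S hS α β a ha, buildFun_lt hj S hS α β b hb] at hab
    have := congrArg Fin.val hab; simp at this
  · exact Fin.ext (by omega)
  · rw [buildFun_eq hj S hS α β a ha, buildFun_gt hj S hS α β b hb] at hab
    have := congrArg Fin.val hab; simp at this
  · rw [buildFun_gt hj S hS α β a ha, buildFun_lt hj S hS α β b hb] at hab
    have hv := congrArg Fin.val hab
    simp only [] at hv
    have hv2 : ((S.orderIsoOfFin hS (α ⟨b, hb⟩) : Fin n)) = ((Sᶜ.orderIsoOfFin (compl_card hj S hS) (β ⟨(a : ℕ) - j - 1, by have := a.isLt; omega⟩) : Fin n)) := by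
      apply Fin.ext
      · omega
    have hmem : ((S.orderIsoOfFin hS (α ⟨b, hb⟩) : Fin n)) ∈ S := (S.orderIsoOfFin hS (α ⟨b, hb⟩)).2
    have hmem2 : ((S.orderIsoOfFin hS (α ⟨b, hb⟩) : Fin n)) ∈ Sᶜ := by
      rw [hv2]; exact (Sᶜ.orderIsoOfFin (compl_card hj S hS) (β ⟨(a : ℕ) - j - 1, by have := a.isLt; omega⟩)).2
    simp [Finset.mem_compl, hmem] at hmem2
  · rw [buildFun_gt hj S hS α β a ha, buildFun_eq hj S hS α β b hb] at hab
    have := congrArg Fin.val hab; simp at this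
  · rw [buildFun_gt hj S hS α β a ha, buildFun_gt hj S hS α β b hb] at hab
    have h1 := congrArg Fin.val hab
    simp only [] at h1
    have h2 : (Sᶜ.orderIsoOfFin (compl_card hj S hS) (β ⟨(a : ℕ) - j - 1, by have := a.isLt; omega⟩))
        = (Sᶜ.orderIsoOfFin (compl_card hj S hS) (β ⟨(b : ℕ) - j - 1, by have := b.isLt; omega⟩)) := by
      ext; omega
    have h3 := β.injective ((Sᶜ.orderIsoOfFin (compl_card hj S hS)).injective h2)
    have := congrArg Fin.val h3
    simp only [] at this
    exact Fin.ext (by omega)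

noncomputable def buildPerm (hj : j ≤ n) (S : Finset (Fin n)) (hS : S.card = j)
    (α : Equiv.Perm (Fin j)) (β : Equiv.Perm (Fin (n - j))) : Equiv.Perm (Fin (n + 1)) :=
  Equiv.ofBijective _ ((Finite.injective_iff_bijective).mp (buildFun_injective hj S hS α β))

lemma buildPerm_apply (hj : j ≤ n) (S : Finset (Fin n)) (hS : S.card = j)
    (α : Equiv.Perm (Fin j)) (β : Equiv.Perm (Fin (n - j))) (i : Fin (n + 1)) :
    buildPerm hj S hS α β i = buildFun hj S hS α β i := rfl

lemma orderIsoOfFin_val_lt {n m : ℕ} (T : Finset (Fin n)) (hT : T.card = m) (p q : Fin m) :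
    ((T.orderIsoOfFin hT p : Fin n) : ℕ) < ((T.orderIsoOfFin hT q : Fin n) : ℕ) ↔ (p : ℕ) < (q : ℕ) := by
  rw [show (((T.orderIsoOfFin hT p : Fin n) : ℕ) < ((T.orderIsoOfFin hT q : Fin n) : ℕ)) ↔
      (T.orderIsoOfFin hT p < T.orderIsoOfFin hT q) from Iff.rfl, OrderIso.lt_iff_lt]
  exact Iff.rfl

lemma permEntry_apply {m : ℕ} (γ : Equiv.Perm (Fin m)) (i : ℕ) (h1 : 1 ≤ i) (h2 : i ≤ m) :
    permEntry m γ i = ((γ ⟨i - 1, by omega⟩ : Fin m) : ℕ) + 1 := dif_pos ⟨h1, h2⟩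

lemma permEntry_out {m : ℕ} (γ : Equiv.Perm (Fin m)) (i : ℕ) (h : ¬ (1 ≤ i ∧ i ≤ m)) :
    permEntry m γ i = 0 := dif_neg h

lemma permEntry_pos {m : ℕ} (γ : Equiv.Perm (Fin m)) (i : ℕ) (h1 : 1 ≤ i) (h2 : i ≤ m) :
    1 ≤ permEntry m γ i := by rw [permEntry_apply γ i h1 h2]; omega

section entries

variable (hj : j ≤ n) (S : Finset (Fin n)) (hS : S.card = j)
  (α : Equiv.Perm (Fin j)) (β : Equiv.Perm (Fin (n - j)))

lemma entry_left (i : ℕ) (h1 : 1 ≤ i) (h2 : i ≤ j) :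
    permEntry (n + 1) (buildPerm hj S hS α β) i
      = ((S.orderIsoOfFin hS (α ⟨i - 1, by omega⟩) : Fin n) : ℕ) + 2 := by
  rw [permEntry_apply _ i h1 (by omega), buildPerm_apply,
    buildFun_lt hj S hS α β _ (by simp; omega)]

lemma entry_mid : permEntry (n + 1) (buildPerm hj S hS α β) (j + 1) = 1 := by
  rw [permEntry_apply _ (j + 1) (by omega) (by omega), buildPerm_apply,
    buildFun_eq hj S hS α β _ (by simp)]

lemma entry_right (i : ℕ) (h1 : j + 2 ≤ i) (h2 : i ≤ n + 1) :
    permEntry (n + 1) (buildPerm hj S hS α β) i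
      = ((Sᶜ.orderIsoOfFin (compl_card hj S hS) (β ⟨i - j - 2, by omega⟩) : Fin n) : ℕ) + 2 := by
  rw [permEntry_apply _ i (by omega) (by omega), buildPerm_apply,
    buildFun_gt hj S hS α β _ (by simp; omega)]
  simp only [Fin.val_mk]
  have hidx : ∀ (p1 : i - 1 - j - 1 < n - j) (p2 : i - j - 2 < n - j),
      (⟨i - 1 - j - 1, p1⟩ : Fin (n - j)) = ⟨i - j - 2, p2⟩ := fun _ _ => Fin.ext (by simp; omega)
  rw [hidx (by omega) (by omega)]

lemma cmp_left (u v : ℕ) (hu : u ≤ j + 1) (hv1 : 1 ≤ v) (hv2 : v ≤ j) :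
    (permEntry (n + 1) (buildPerm hj S hS α β) u < permEntry (n + 1) (buildPerm hj S hS α β) v
      ↔ permEntry j α u < permEntry j α v) := by
  rw [entry_left hj S hS α β v hv1 hv2, permEntry_apply α v hv1 hv2]
  rcases Nat.eq_zero_or_pos u with h0 | h0
  · subst h0
    rw [permEntry_out _ 0 (by omega), permEntry_out α 0 (by omega)]
    simp
  rcases Nat.lt_or_ge u (j + 1) with hu' | hu'
  · rw [entry_left hj S hS α β u h0 (by omega), permEntry_apply α u h0 (by omega)]
    rw [show ∀ a b : ℕ, (a + 2 < b + 2 ↔ a < b) from fun a b => by omega]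
    rw [show ∀ a b : ℕ, (a + 1 < b + 1 ↔ a < b) from fun a b => by omega]
    rw [orderIsoOfFin_val_lt]
  · have hu2 : u = j + 1 := by omega
    subst hu2
    rw [entry_mid hj S hS α β, permEntry_out α (j + 1) (by omega)]
    simp
end entries

section entries2
variable {n j : ℕ} (hj : j ≤ n) (S : Finset (Fin n)) (hS : S.card = j)
  (α : Equiv.Perm (Fin j)) (β : Equiv.Perm (Fin (n - j)))

lemma cmp_right (u v : ℕ) (hu1 : j + 1 ≤ u) (hu2 : u ≤ n + 1) (hv1 : j + 2 ≤ v) (hv2 : v ≤ n + 1) :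
    (permEntry (n + 1) (buildPerm hj S hS α β) u < permEntry (n + 1) (buildPerm hj S hS α β) v
      ↔ permEntry (n - j) β (u - (j + 1)) < permEntry (n - j) β (v - (j + 1))) := by
  rw [entry_right hj S hS α β v hv1 hv2,
    permEntry_apply β (v - (j + 1)) (by omega) (by omega)]
  have hidxv : ∀ (p1 : v - (j+1) - 1 < n - j) (p2 : v - j - 2 < n - j),
      (⟨v - (j+1) - 1, p1⟩ : Fin (n - j)) = ⟨v - j - 2, p2⟩ := fun _ _ => Fin.ext (by simp; omega)
  rw [hidxv (by omega) (by omega)]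
  rcases Nat.lt_or_ge u (j + 2) with hu' | hu'
  · have : u = j + 1 := by omega
    subst this
    rw [entry_mid hj S hS α β, permEntry_out β (j + 1 - (j + 1)) (by omega)]
    simp
  · rw [entry_right hj S hS α β u hu' hu2,
      permEntry_apply β (u - (j + 1)) (by omega) (by omega)]
    have hidxu : ∀ (p1 : u - (j+1) - 1 < n - j) (p2 : u - j - 2 < n - j),
        (⟨u - (j+1) - 1, p1⟩ : Fin (n - j)) = ⟨u - j - 2, p2⟩ := fun _ _ => Fin.ext (by simp; omega)
    rw [hidxu (by omega) (by omega)]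
    rw [show ∀ a b : ℕ, (a + 2 < b + 2 ↔ a < b) from fun a b => by omega]
    rw [show ∀ a b : ℕ, (a + 1 < b + 1 ↔ a < b) from fun a b => by omega]
    rw [orderIsoOfFin_val_lt]

lemma lp_build :
    leftPeakCount (n + 1) (buildPerm hj S hS α β) = extPeakCount j α + leftPeakCount (n - j) β := by
  set σ := buildPerm hj S hS α β with hσ
  set P : ℕ → Prop := fun i =>
    permEntry (n+1) σ (i - 1) < permEntry (n+1) σ i ∧
    permEntry (n+1) σ (i + 1) < permEntry (n+1) σ i with hP
  have hmid : ∀ i, i = j + 1 → i ≤ n → ¬ P i := by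
    intro i hi hin
    subst hi
    rw [hP]
    simp only [not_and]
    intro _
    rw [entry_mid hj S hS α β, entry_right hj S hS α β (j + 2) le_rfl (by omega)]
    omega
  have hsplit : ((Finset.Icc 1 n).filter P) =
      ((Finset.Icc 1 j).filter P) ∪ ((Finset.Icc (j+2) n).filter P) := by
    ext i
    simp only [Finset.mem_filter, Finset.mem_union, Finset.mem_Icc]
    constructor
    · rintro ⟨⟨hi1, hi2⟩, hPi⟩
      rcases Nat.lt_or_ge i (j + 1) with h | h
      · exact Or.inl ⟨⟨hi1, by omega⟩, hPi⟩
      · rcases Nat.lt_or_ge i (j + 2) with h' | h'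
        · exact absurd hPi (hmid i (by omega) hi2)
        · exact Or.inr ⟨⟨h', hi2⟩, hPi⟩
    · rintro (⟨⟨hi1, hi2⟩, hPi⟩ | ⟨⟨hi1, hi2⟩, hPi⟩)
      · exact ⟨⟨hi1, by omega⟩, hPi⟩
      · exact ⟨⟨by omega, hi2⟩, hPi⟩
  have hdisj : Disjoint ((Finset.Icc 1 j).filter P) ((Finset.Icc (j+2) n).filter P) := by
    apply Finset.disjoint_filter_filter
    rw [Finset.disjoint_left]
    intro a ha hb
    simp only [Finset.mem_Icc] at ha hb
    omega
  have hA : ((Finset.Icc 1 j).filter P).card = extPeakCount j α := by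
    rw [extPeakCount]
    congr 1
    apply Finset.filter_congr
    intro i hi
    simp only [Finset.mem_Icc] at hi
    rw [hP]
    simp only
    constructor
    · rintro ⟨c1, c2⟩
      exact ⟨(cmp_left hj S hS α β (i-1) i (by omega) hi.1 hi.2).mp c1,
             (cmp_left hj S hS α β (i+1) i (by omega) hi.1 hi.2).mp c2⟩
    · rintro ⟨c1, c2⟩
      exact ⟨(cmp_left hj S hS α β (i-1) i (by omega) hi.1 hi.2).mpr c1,
             (cmp_left hj S hS α β (i+1) i (by omega) hi.1 hi.2).mpr c2⟩
  have hB : ((Finset.Icc (j+2) n).filter P).card = leftPeakCount (n - j) β := by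
    rw [leftPeakCount]
    apply Finset.card_bij' (fun i _ => i - (j + 1)) (fun i _ => i + (j + 1))
    · intro i hi
      simp only [Finset.mem_filter, Finset.mem_Icc] at hi ⊢
      obtain ⟨⟨hi1, hi2⟩, hPi⟩ := hi
      refine ⟨⟨by omega, by omega⟩, ?_, ?_⟩
      · have := (cmp_right hj S hS α β (i - 1) i (by omega) (by omega) (by omega) (by omega)).mp hPi.1
        rwa [show i - 1 - (j+1) = i - (j+1) - 1 from by omega] at this
      · have := (cmp_right hj S hS α β (i + 1) i (by omega) (by omega) (by omega) (by omega)).mp hPi.2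
        rwa [show i + 1 - (j+1) = i - (j+1) + 1 from by omega] at this
    · intro i hi
      simp only [Finset.mem_filter, Finset.mem_Icc] at hi ⊢
      obtain ⟨⟨hi1, hi2⟩, hPi⟩ := hi
      have hjn : j + 1 ≤ n := by omega
      refine ⟨⟨by omega, by omega⟩, ?_, ?_⟩
      · have := (cmp_right hj S hS α β (i + (j+1) - 1) (i + (j+1)) (by omega) (by omega) (by omega) (by omega)).mpr ?_
        · exact this
        · rw [show i + (j+1) - 1 - (j+1) = i - 1 from by omega, show i + (j+1) - (j+1) = i from by omega]
          exact hPi.1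
      · have := (cmp_right hj S hS α β (i + (j+1) + 1) (i + (j+1)) (by omega) (by omega) (by omega) (by omega)).mpr ?_
        · exact this
        · rw [show i + (j+1) + 1 - (j+1) = i + 1 from by omega, show i + (j+1) - (j+1) = i from by omega]
          exact hPi.2
    · intro i hi
      simp only [Finset.mem_filter, Finset.mem_Icc] at hi
      omega
    · intro i hi
      simp only [Finset.mem_filter, Finset.mem_Icc] at hi
      omega
  rw [leftPeakCount]
  have hfe : (Finset.filter (fun i =>
      permEntry (n+1) σ (i-1) < permEntry (n+1) σ i ∧
      permEntry (n+1) σ (i+1) < permEntry (n+1) σ i) (Finset.Icc 1 (n+1-1)))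
      = Finset.filter P (Finset.Icc 1 n) := by
    rw [show n + 1 - 1 = n from rfl]
  rw [hfe, hsplit, Finset.card_union_of_disjoint hdisj, hA, hB]

end entries2

def Dom (n : ℕ) : Finset ((j : ℕ) × (_S : Finset (Fin n)) × (Equiv.Perm (Fin j) × Equiv.Perm (Fin (n - j)))) :=
  (Finset.range (n+1)).sigma fun j => (Finset.powersetCard j (Finset.univ : Finset (Fin n))).sigma
    fun _S => Finset.univ

lemma mem_dom_le {n : ℕ} {a : (j : ℕ) × (_S : Finset (Fin n)) × (Equiv.Perm (Fin j) × Equiv.Perm (Fin (n - j)))}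
    (ha : a ∈ Dom n) : a.1 ≤ n := by
  rw [Dom, Finset.mem_sigma] at ha
  have := ha.1
  simp only [Finset.mem_range] at this
  omega

lemma mem_dom_card {n : ℕ} {a : (j : ℕ) × (_S : Finset (Fin n)) × (Equiv.Perm (Fin j) × Equiv.Perm (Fin (n - j)))}
    (ha : a ∈ Dom n) : a.2.1.card = a.1 := by
  rw [Dom, Finset.mem_sigma] at ha
  have := ha.2
  rw [Finset.mem_sigma] at this
  have h2 := this.1
  rw [Finset.mem_powersetCard] at h2
  exact h2.2

noncomputable def Fmap (n : ℕ) (a : (j : ℕ) × (_S : Finset (Fin n)) × (Equiv.Perm (Fin j) × Equiv.Perm (Fin (n - j))))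
    (ha : a ∈ Dom n) : Equiv.Perm (Fin (n+1)) :=
  buildPerm (mem_dom_le ha) a.2.1 (mem_dom_card ha) a.2.2.1 a.2.2.2

lemma dom_card (n : ℕ) : (Dom n).card = (n+1).factorial := by
  rw [Dom, Finset.card_sigma]
  have : ∀ j ∈ Finset.range (n+1),
      ((Finset.powersetCard j (Finset.univ : Finset (Fin n))).sigma
        (fun _S => (Finset.univ : Finset (Equiv.Perm (Fin j) × Equiv.Perm (Fin (n - j)))))).card
      = n.factorial := by
    intro j hj
    rw [Finset.mem_range] at hj
    rw [Finset.card_sigma]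
    have hcard : ∀ _S ∈ Finset.powersetCard j (Finset.univ : Finset (Fin n)),
        (Finset.univ : Finset (Equiv.Perm (Fin j) × Equiv.Perm (Fin (n - j)))).card
        = j.factorial * (n - j).factorial := by
      intro _S _
      rw [Finset.card_univ, Fintype.card_prod, Fintype.card_perm, Fintype.card_perm,
        Fintype.card_fin, Fintype.card_fin]
    rw [Finset.sum_congr rfl hcard, Finset.sum_const, Finset.card_powersetCard,
      Finset.card_univ, Fintype.card_fin, smul_eq_mul, ← mul_assoc,
      Nat.choose_mul_factorial_mul_factorial (by omega)]
  rw [Finset.sum_congr rfl this, Finset.sum_const, Finset.card_range, smul_eq_mul,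
    Nat.factorial_succ]

lemma fmap_inj (n : ℕ) : ∀ a₁ (ha₁ : a₁ ∈ Dom n) a₂ (ha₂ : a₂ ∈ Dom n),
    Fmap n a₁ ha₁ = Fmap n a₂ ha₂ → a₁ = a₂ := by
  rintro ⟨j₁, S₁, α₁, β₁⟩ ha₁ ⟨j₂, S₂, α₂, β₂⟩ ha₂ heq
  have hj₁ : j₁ ≤ n := mem_dom_le ha₁
  have hj₂ : j₂ ≤ n := mem_dom_le ha₂
  have hS₁ : S₁.card = j₁ := mem_dom_card ha₁
  have hS₂ : S₂.card = j₂ := mem_dom_card ha₂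
  have hfun : ∀ i : Fin (n+1),
      buildFun hj₁ S₁ hS₁ α₁ β₁ i = buildFun hj₂ S₂ hS₂ α₂ β₂ i := by
    intro i
    have := congrArg (fun (e : Equiv.Perm (Fin (n+1))) => e i) heq
    simpa [Fmap, buildPerm_apply] using this
  -- j₁ = j₂
  have hjj : j₁ = j₂ := by
    by_contra hne
    rcases Nat.lt_or_ge j₁ j₂ with h | h
    · have h1 := hfun ⟨j₁, by omega⟩
      rw [buildFun_eq hj₁ S₁ hS₁ α₁ β₁ _ (by simp), buildFun_lt hj₂ S₂ hS₂ α₂ β₂ _ (by simpa)] at h1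
      have := congrArg Fin.val h1
      simp at this
    · have hlt : j₂ < j₁ := by omega
      have h1 := hfun ⟨j₂, by omega⟩
      rw [buildFun_eq hj₂ S₂ hS₂ α₂ β₂ _ (by simp), buildFun_lt hj₁ S₁ hS₁ α₁ β₁ _ (by simpa)] at h1
      have := congrArg Fin.val h1
      simp at this
  subst hjj
  -- S₁ = S₂
  have hSS : S₁ = S₂ := by
    apply Finset.eq_of_subset_of_card_le _ (by rw [hS₁, hS₂])
    intro v hv
    set p : Fin j₁ := (S₁.orderIsoOfFin hS₁).symm (⟨v, hv⟩ : {x // x ∈ S₁}) with hp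
    set q : Fin j₁ := α₁⁻¹ p with hq
    have hqn : (q : ℕ) < n + 1 := by have := q.isLt; omega
    have h1 := hfun ⟨q, hqn⟩
    have hqj : ((⟨(q : ℕ), hqn⟩ : Fin (n+1)) : ℕ) < j₁ := q.isLt
    rw [buildFun_lt hj₁ S₁ hS₁ α₁ β₁ _ hqj, buildFun_lt hj₂ S₂ hS₂ α₂ β₂ _ hqj] at h1
    have hval := congrArg Fin.val h1
    simp only [Fin.val_mk] at hval
    have hmk : (⟨((⟨(q : ℕ), hqn⟩ : Fin (n+1)) : ℕ), hqj⟩ : Fin j₁) = q := Fin.ext rfl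
    rw [hmk] at hval
    have hα : α₁ q = p := by rw [hq]; simp
    rw [hα] at hval
    have hep : ((S₁.orderIsoOfFin hS₁) p : Fin n) = v := by
      rw [hp]; simp
    rw [hep] at hval
    have : ((S₂.orderIsoOfFin hS₂) (α₂ q) : Fin n) ∈ S₂ := ((S₂.orderIsoOfFin hS₂) (α₂ q)).2
    have hvv : ((S₂.orderIsoOfFin hS₂) (α₂ q) : Fin n) = v := by
      apply Fin.ext
      omega
    rwa [hvv] at this
  subst hSS
  -- α₁ = α₂
  have hαα : α₁ = α₂ := by
    apply Equiv.ext
    intro q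
    have hqn : (q : ℕ) < n + 1 := by have := q.isLt; omega
    have h1 := hfun ⟨q, hqn⟩
    have hqj : ((⟨(q : ℕ), hqn⟩ : Fin (n+1)) : ℕ) < j₁ := q.isLt
    rw [buildFun_lt hj₁ S₁ hS₁ α₁ β₁ _ hqj, buildFun_lt hj₂ S₁ hS₂ α₂ β₂ _ hqj] at h1
    have hval := congrArg Fin.val h1
    simp only [Fin.val_mk] at hval
    have hmk : (⟨((⟨(q : ℕ), hqn⟩ : Fin (n+1)) : ℕ), hqj⟩ : Fin j₁) = q := Fin.ext rfl
    rw [hmk] at hval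
    have h2 : (S₁.orderIsoOfFin hS₁) (α₁ q) = (S₁.orderIsoOfFin hS₂) (α₂ q) := by
      ext
      omega
    have h3 : (S₁.orderIsoOfFin hS₁) (α₁ q) = (S₁.orderIsoOfFin hS₁) (α₂ q) := by
      rw [h2]
    exact (S₁.orderIsoOfFin hS₁).injective h3
  subst hαα
  -- β₁ = β₂
  have hββ : β₁ = β₂ := by
    apply Equiv.ext
    intro r
    have hrn : j₁ + 1 + (r : ℕ) < n + 1 := by have := r.isLt; omega
    have h1 := hfun ⟨j₁ + 1 + (r : ℕ), hrn⟩
    have hgt : j₁ < ((⟨j₁ + 1 + (r : ℕ), hrn⟩ : Fin (n+1)) : ℕ) := by simp; omega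
    rw [buildFun_gt hj₁ S₁ hS₁ α₁ β₁ _ hgt, buildFun_gt hj₂ S₁ hS₂ α₁ β₂ _ hgt] at h1
    have hval := congrArg Fin.val h1
    simp only [Fin.val_mk] at hval
    have hmk : ∀ (pf : j₁ + 1 + (r : ℕ) - j₁ - 1 < n - j₁),
        (⟨j₁ + 1 + (r : ℕ) - j₁ - 1, pf⟩ : Fin (n - j₁)) = r := fun _ => Fin.ext (by simp; omega)
    rw [hmk] at hval
    have h2 : (S₁ᶜ.orderIsoOfFin (compl_card hj₁ S₁ hS₁)) (β₁ r)
        = (S₁ᶜ.orderIsoOfFin (compl_card hj₁ S₁ hS₁)) (β₂ r) := by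
      have h2' : (S₁ᶜ.orderIsoOfFin (compl_card hj₁ S₁ hS₁)) (β₁ r)
          = (S₁ᶜ.orderIsoOfFin (compl_card hj₂ S₁ hS₂)) (β₂ r) := by
        ext
        omega
      rw [h2']
    exact (S₁ᶜ.orderIsoOfFin (compl_card hj₁ S₁ hS₁)).injective h2
  subst hββ
  rfl

lemma key_sum (n : ℕ) :
    (∑ σ : Equiv.Perm (Fin (n+1)), (Polynomial.X : Polynomial ℚ) ^ leftPeakCount (n+1) σ)
      = ∑ j ∈ Finset.range (n+1), (n.choose j : Polynomial ℚ) *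
          ((∑ α : Equiv.Perm (Fin j), (Polynomial.X : Polynomial ℚ) ^ extPeakCount j α) *
           (∑ β : Equiv.Perm (Fin (n-j)), (Polynomial.X : Polynomial ℚ) ^ leftPeakCount (n-j) β)) := by
  have hrhs : ∀ j ∈ Finset.range (n+1), (n.choose j : Polynomial ℚ) *
        ((∑ α : Equiv.Perm (Fin j), (Polynomial.X : Polynomial ℚ) ^ extPeakCount j α) *
         (∑ β : Equiv.Perm (Fin (n-j)), (Polynomial.X : Polynomial ℚ) ^ leftPeakCount (n-j) β))
      = ∑ S ∈ Finset.powersetCard j (Finset.univ : Finset (Fin n)),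
          ∑ p : Equiv.Perm (Fin j) × Equiv.Perm (Fin (n-j)),
            (Polynomial.X : Polynomial ℚ) ^ (extPeakCount j p.1 + leftPeakCount (n-j) p.2) := by
    intro j _
    rw [Finset.sum_const]
    rw [Finset.card_powersetCard, Finset.card_univ, Fintype.card_fin]
    rw [nsmul_eq_mul]
    congr 1
    rw [Fintype.sum_prod_type, Finset.sum_mul_sum]
    simp [pow_add]
  rw [Finset.sum_congr rfl hrhs]
  have hsig : (∑ j ∈ Finset.range (n+1),
      ∑ S ∈ Finset.powersetCard j (Finset.univ : Finset (Fin n)),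
        ∑ p : Equiv.Perm (Fin j) × Equiv.Perm (Fin (n-j)),
          (Polynomial.X : Polynomial ℚ) ^ (extPeakCount j p.1 + leftPeakCount (n-j) p.2))
      = ∑ a ∈ Dom n, (Polynomial.X : Polynomial ℚ) ^ (extPeakCount a.1 a.2.2.1 + leftPeakCount (n - a.1) a.2.2.2) := by
    rw [Dom, Finset.sum_sigma]
    apply Finset.sum_congr rfl
    intro j _
    rw [Finset.sum_sigma]
  rw [hsig]
  symm
  apply Finset.sum_bij (Fmap n)
  · intro a _
    exact Finset.mem_univ _
  · exact fmap_inj n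
  · -- surjectivity
    intro b _
    obtain ⟨a, ha, hab⟩ := Finset.surj_on_of_inj_on_of_card_le (fun a ha => Fmap n a ha)
      (fun a _ => Finset.mem_univ _) (fun a₁ a₂ ha₁ ha₂ h => fmap_inj n a₁ ha₁ a₂ ha₂ h)
      (by rw [dom_card, Finset.card_univ, Fintype.card_perm, Fintype.card_fin]) b (Finset.mem_univ b)
    exact ⟨a, ha, hab.symm⟩
  · intro a ha
    rw [Fmap, lp_build]

lemma leftPeakCount_le (n : ℕ) (σ : Equiv.Perm (Fin n)) : leftPeakCount n σ ≤ n := by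
  calc leftPeakCount n σ ≤ (Finset.Icc 1 (n-1)).card := Finset.card_filter_le _ _
  _ ≤ n := by rw [Nat.card_Icc]; omega

lemma extPeakCount_le (n : ℕ) (σ : Equiv.Perm (Fin n)) : extPeakCount n σ ≤ n := by
  calc extPeakCount n σ ≤ (Finset.Icc 1 n).card := Finset.card_filter_le _ _
  _ ≤ n := by rw [Nat.card_Icc]; omega

lemma LpolyQ_eq_sum (n : ℕ) :
    LpolyQ n = ∑ σ : Equiv.Perm (Fin n), (Polynomial.X : Polynomial ℚ) ^ leftPeakCount n σ := by
  rw [LpolyQ]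
  rw [← Finset.sum_fiberwise_of_maps_to (g := leftPeakCount n) (t := Finset.range (n+1))
    (fun σ _ => Finset.mem_range.mpr (by have := leftPeakCount_le n σ; omega))
    (fun σ => (Polynomial.X : Polynomial ℚ) ^ leftPeakCount n σ)]
  apply Finset.sum_congr rfl
  intro k _
  rw [Finset.sum_congr rfl (fun σ hσ => by
    rw [(Finset.mem_filter.mp hσ).2])]
  rw [Finset.sum_const, nsmul_eq_mul, leftPeakNum]

lemma WpolyQ_eq_sum (n : ℕ) :
    WpolyQ n = ∑ σ : Equiv.Perm (Fin n), (Polynomial.X : Polynomial ℚ) ^ extPeakCount n σ := by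
  rw [WpolyQ]
  rw [← Finset.sum_fiberwise_of_maps_to (g := extPeakCount n) (t := Finset.range (n+1))
    (fun σ _ => Finset.mem_range.mpr (by have := extPeakCount_le n σ; omega))
    (fun σ => (Polynomial.X : Polynomial ℚ) ^ extPeakCount n σ)]
  apply Finset.sum_congr rfl
  intro k _
  rw [Finset.sum_congr rfl (fun σ hσ => by
    rw [(Finset.mem_filter.mp hσ).2])]
  rw [Finset.sum_const, nsmul_eq_mul, extPeakNum]

lemma LpolyQ_rec (n : ℕ) :
    LpolyQ (n + 1) = ∑ j ∈ Finset.range (n+1),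
      (n.choose j : Polynomial ℚ) * (WpolyQ j * LpolyQ (n - j)) := by
  rw [LpolyQ_eq_sum, key_sum]
  apply Finset.sum_congr rfl
  intro j _
  rw [WpolyQ_eq_sum, LpolyQ_eq_sum]

open PowerSeries

noncomputable def dWser : PowerSeries (Polynomial ℚ) :=
  PowerSeries.mk fun n => ((n.factorial : ℚ))⁻¹ • WpolyQ n

noncomputable def Fser : PowerSeries (Polynomial ℚ) :=
  PowerSeries.mk fun n => ((n.factorial : ℚ))⁻¹ • LpolyQ n

noncomputable def Eser : PowerSeries (Polynomial ℚ) :=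
  PowerSeries.mk fun N => ∑ m ∈ Finset.range (N + 1),
    ((m.factorial : ℚ))⁻¹ • (PowerSeries.coeff (R := Polynomial ℚ) N (WegfInt ^ m))

lemma natCast_poly_eq_smul (c : ℕ) (p : Polynomial ℚ) : (c : Polynomial ℚ) * p = (c : ℚ) • p := by
  rw [Polynomial.smul_eq_C_mul]
  norm_cast

lemma deriv_WegfInt : PowerSeries.derivative (Polynomial ℚ) WegfInt = dWser := by
  apply PowerSeries.ext
  intro N
  rw [PowerSeries.coeff_derivative, dWser, PowerSeries.coeff_mk, WegfInt, PowerSeries.coeff_mk]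
  rw [if_neg (by omega)]
  rw [show N + 1 - 1 = N from rfl]
  rw [smul_mul_assoc, mul_comm, show ((N : Polynomial ℚ) + 1) = ((N + 1 : ℕ) : Polynomial ℚ) from by push_cast; ring,
    natCast_poly_eq_smul, smul_smul]
  · congr 1
    have h1 : ((N.factorial : ℚ)) ≠ 0 := Nat.cast_ne_zero.mpr (Nat.factorial_ne_zero N)
    have h2 : ((N : ℚ) + 1) ≠ 0 := by positivity
    rw [Nat.factorial_succ]
    push_cast
    rw [mul_inv, mul_comm]
    field_simp

lemma derivFun_pow (m : ℕ) (hm : 1 ≤ m) (f : PowerSeries (Polynomial ℚ)) :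
    PowerSeries.derivativeFun (f ^ m) = m • (f ^ (m - 1) * PowerSeries.derivativeFun f) := by
  induction m with
  | zero => omega
  | succ k ih =>
    rcases Nat.eq_zero_or_pos k with h0 | h0
    · subst h0
      simp
    · rw [pow_succ, PowerSeries.derivativeFun_mul, ih h0]
      rw [show k + 1 - 1 = k from rfl]
      obtain ⟨k', rfl⟩ : ∃ k', k = k' + 1 := ⟨k - 1, by omega⟩
      rw [show k' + 1 - 1 = k' from rfl]
      simp only [smul_eq_mul, nsmul_eq_mul]
      push_cast
      ring

lemma derivFun_WegfInt : PowerSeries.derivativeFun WegfInt = dWser := deriv_WegfInt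

lemma coeff_WegfInt_pow_eq_zero {N m : ℕ} (h : N < m) :
    PowerSeries.coeff (R := Polynomial ℚ) N (WegfInt ^ m) = 0 := by
  have hX : (PowerSeries.X : PowerSeries (Polynomial ℚ)) ∣ WegfInt := by
    rw [PowerSeries.X_dvd_iff, WegfInt]
    simp
  obtain ⟨f, hf⟩ := pow_dvd_pow_of_dvd hX m
  rw [hf, PowerSeries.coeff_mul]
  apply Finset.sum_eq_zero
  intro p hp
  rw [Finset.HasAntidiagonal.mem_antidiagonal] at hp
  rw [PowerSeries.coeff_X_pow, if_neg (by omega), zero_mul]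

lemma coeff_Eser_ext {N M : ℕ} (h : N < M) :
    PowerSeries.coeff (R := Polynomial ℚ) N Eser
      = ∑ m ∈ Finset.range M, ((m.factorial : ℚ))⁻¹ • (PowerSeries.coeff (R := Polynomial ℚ) N (WegfInt ^ m)) := by
  rw [Eser, PowerSeries.coeff_mk]
  apply Finset.sum_subset (by intro x hx; simp only [Finset.mem_range] at hx ⊢; omega)
  intro m _ hm
  simp only [Finset.mem_range] at hm
  rw [coeff_WegfInt_pow_eq_zero (by omega), smul_zero]

lemma recE (N : ℕ) :
    ((N : ℚ) + 1) • PowerSeries.coeff (R := Polynomial ℚ) (N + 1) Eser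
      = PowerSeries.coeff (R := Polynomial ℚ) N (dWser * Eser) := by
  rw [coeff_Eser_ext (show N + 1 < N + 2 from by omega), Finset.smul_sum]
  have hterm : ∀ m, ((N : ℚ) + 1) • ((m.factorial : ℚ))⁻¹ • PowerSeries.coeff (R := Polynomial ℚ) (N+1) (WegfInt ^ m)
      = if m = 0 then 0 else (((m-1).factorial : ℚ))⁻¹ • PowerSeries.coeff (R := Polynomial ℚ) N (WegfInt ^ (m-1) * dWser) := by
    intro m
    rcases Nat.eq_zero_or_pos m with h0 | h0
    · subst h0
      rw [if_pos rfl, pow_zero, PowerSeries.coeff_one, if_neg (by omega)]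
      simp
    · rw [if_neg (by omega)]
      have hd : PowerSeries.coeff (R := Polynomial ℚ) N (PowerSeries.derivativeFun (WegfInt ^ m))
          = PowerSeries.coeff (R := Polynomial ℚ) (N+1) (WegfInt ^ m) * ((N : Polynomial ℚ) + 1) :=
        PowerSeries.coeff_derivativeFun _ N
      have hl : PowerSeries.derivativeFun (WegfInt ^ m)
          = m • (WegfInt ^ (m-1) * dWser) := by
        rw [derivFun_pow m h0 WegfInt, derivFun_WegfInt]
      rw [hl, map_nsmul] at hd
      have hsm : ((N : ℚ) + 1) • ((m.factorial : ℚ))⁻¹ • PowerSeries.coeff (R := Polynomial ℚ) (N+1) (WegfInt ^ m)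
          = ((m.factorial : ℚ))⁻¹ • (PowerSeries.coeff (R := Polynomial ℚ) (N+1) (WegfInt ^ m) * ((N : Polynomial ℚ) + 1)) := by
        rw [smul_comm]
        congr 1
        rw [mul_comm, show ((N : Polynomial ℚ) + 1) = ((N + 1 : ℕ) : Polynomial ℚ) from by push_cast; ring,
          natCast_poly_eq_smul]
        push_cast
        ring_nf
      rw [hsm, ← hd, ← Nat.cast_smul_eq_nsmul ℚ, smul_smul]
      congr 1
      obtain ⟨m', rfl⟩ : ∃ m', m = m' + 1 := ⟨m - 1, by omega⟩
      rw [show m' + 1 - 1 = m' from rfl, Nat.factorial_succ]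
      have h1 : ((m'.factorial : ℚ)) ≠ 0 := Nat.cast_ne_zero.mpr (Nat.factorial_ne_zero m')
      have h2 : ((m' : ℚ) + 1) ≠ 0 := by positivity
      push_cast
      field_simp
  rw [Finset.sum_congr rfl (fun m _ => hterm m)]
  rw [Finset.sum_range_succ']
  rw [if_pos rfl, add_zero]
  have hred : ∀ m ∈ Finset.range (N+1),
      (if m + 1 = 0 then (0 : Polynomial ℚ) else (((m+1-1).factorial : ℚ))⁻¹ • PowerSeries.coeff (R := Polynomial ℚ) N (WegfInt ^ (m+1-1) * dWser))
      = ((m.factorial : ℚ))⁻¹ • PowerSeries.coeff (R := Polynomial ℚ) N (WegfInt ^ m * dWser) := by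
    intro m _
    rw [if_neg (by omega)]
    norm_num
  rw [Finset.sum_congr rfl hred]
  -- now RHS
  rw [PowerSeries.coeff_mul]
  have hE : ∀ p ∈ Finset.HasAntidiagonal.antidiagonal N,
      PowerSeries.coeff (R := Polynomial ℚ) p.1 dWser * PowerSeries.coeff (R := Polynomial ℚ) p.2 Eser
      = ∑ m ∈ Finset.range (N+1), ((m.factorial : ℚ))⁻¹ •
          (PowerSeries.coeff (R := Polynomial ℚ) p.1 dWser * PowerSeries.coeff (R := Polynomial ℚ) p.2 (WegfInt ^ m)) := by
    intro p hp
    rw [Finset.HasAntidiagonal.mem_antidiagonal] at hp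
    rw [coeff_Eser_ext (show p.2 < N + 1 from by omega), Finset.mul_sum]
    apply Finset.sum_congr rfl
    intro m _
    rw [mul_smul_comm]
  rw [Finset.sum_congr rfl hE, Finset.sum_comm]
  apply Finset.sum_congr rfl
  intro m _
  rw [← Finset.smul_sum]
  congr 1
  rw [show WegfInt ^ m * dWser = dWser * WegfInt ^ m from mul_comm _ _, PowerSeries.coeff_mul]

lemma recF (N : ℕ) :
    ((N : ℚ) + 1) • PowerSeries.coeff (R := Polynomial ℚ) (N + 1) Fser
      = PowerSeries.coeff (R := Polynomial ℚ) N (dWser * Fser) := by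
  rw [Fser, PowerSeries.coeff_mk, smul_smul, PowerSeries.coeff_mul,
    Finset.Nat.sum_antidiagonal_eq_sum_range_succ_mk, LpolyQ_rec, Finset.smul_sum]
  apply Finset.sum_congr rfl
  intro k hk
  rw [Finset.mem_range] at hk
  have hkN : k ≤ N := by omega
  simp only [Fser, dWser, PowerSeries.coeff_mk]
  rw [natCast_poly_eq_smul, smul_smul, smul_mul_smul_comm]
  congr 1
  have hcf := Nat.choose_mul_factorial_mul_factorial hkN
  have key : (N.choose k : ℚ) * (k.factorial : ℚ) * ((N - k).factorial : ℚ) = (N.factorial : ℚ) := by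
    exact_mod_cast congrArg (Nat.cast : ℕ → ℚ) hcf
  have h1 : ((k.factorial : ℚ)) ≠ 0 := Nat.cast_ne_zero.mpr (Nat.factorial_ne_zero _)
  have h2 : (((N - k).factorial : ℚ)) ≠ 0 := Nat.cast_ne_zero.mpr (Nat.factorial_ne_zero _)
  have h3 : ((N.factorial : ℚ)) ≠ 0 := Nat.cast_ne_zero.mpr (Nat.factorial_ne_zero _)
  have h4 : ((N : ℚ) + 1) ≠ 0 := by positivity
  rw [Nat.factorial_succ]
  push_cast
  field_simp
  linear_combination key

lemma leftPeakNum_zero : leftPeakNum 0 0 = 1 := by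
  rw [leftPeakNum]
  have : ∀ σ : Equiv.Perm (Fin 0), leftPeakCount 0 σ = 0 := by
    intro σ
    rw [leftPeakCount]
    simp
  rw [Finset.filter_true_of_mem (fun σ _ => this σ), Finset.card_univ, Fintype.card_perm]
  simp

lemma FE : Fser = Eser := by
  apply PowerSeries.ext
  intro N
  induction N using Nat.strong_induction_on with
  | _ N ih =>
    match N with
    | 0 =>
      rw [Fser, Eser, PowerSeries.coeff_mk, PowerSeries.coeff_mk]
      rw [LpolyQ]
      simp [leftPeakNum_zero]
    | Nat.succ N =>
      have h1 := recF N
      have h2 := recE N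
      have hmul : PowerSeries.coeff (R := Polynomial ℚ) N (dWser * Fser)
          = PowerSeries.coeff (R := Polynomial ℚ) N (dWser * Eser) := by
        rw [PowerSeries.coeff_mul, PowerSeries.coeff_mul]
        apply Finset.sum_congr rfl
        intro p hp
        rw [Finset.HasAntidiagonal.mem_antidiagonal] at hp
        rw [ih p.2 (by omega)]
      have h := h1.trans (hmul.trans h2.symm)
      exact smul_right_injective (Polynomial ℚ) (by positivity : ((N : ℚ) + 1) ≠ 0) h


/-- `Σ_{n≥0} L_n(x)·tⁿ/n! = Σ_{m≥0} (1/m!)·(Σ_{n≥0} W_n(x)·t^{n+1}/(n+1)!)^m`,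
the right side being the formal exponential (its `t^N`-coefficient only involves `m ≤ N`
since the inner series has zero constant term). -/
theorem stmt_11 :
    (PowerSeries.mk fun n => ((n.factorial : ℚ))⁻¹ • LpolyQ n)
      = PowerSeries.mk fun N => ∑ m ∈ Finset.range (N + 1),
          ((m.factorial : ℚ))⁻¹ • (PowerSeries.coeff (R := Polynomial ℚ) N (WegfInt ^ m)) := FE
end

section
/- Let D be the unique derivation of the polynomial ring ℚ[a,x,y] determined by D(a) = a·x, D(x) = x·y and D(y) = x². Then for every n ≥ 0, Dⁿ(a) = a·Σ_{k=1}^{n} Λ(n,k)·x^k·y^{n−k}, where Λ(n,k) is the number of permutations of [n] with exactly k up-down runs (the n = 0 case reading D⁰(a) = a). -/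
open MvPolynomial

namespace UDRuns

/-- number of direction changes among `d 0, …, d m`. -/
def cnt (d : ℕ → Bool) (m : ℕ) : ℕ :=
  ∑ j ∈ Finset.range m, (if d j = d (j + 1) then 0 else 1)

/-- the direction sequence after inserting the maximum at gap `p`. -/
def splice (d : ℕ → Bool) (p : ℕ) : ℕ → Bool := fun j =>
  if j < p then d j else if j = p then true else if j = p + 1 then false else d (j - 1)

lemma cnt_succ (d : ℕ → Bool) (m : ℕ) :
    cnt d (m + 1) = cnt d m + (if d m = d (m + 1) then 0 else 1) :=
  Finset.sum_range_succ _ m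

lemma cnt_le (d : ℕ → Bool) (m : ℕ) : cnt d m ≤ m := by
  calc cnt d m ≤ ∑ _j ∈ Finset.range m, 1 := Finset.sum_le_sum (by intro i _; split <;> omega)
  _ = m := by simp

lemma cnt_congr {d d' : ℕ → Bool} {m : ℕ} (h : ∀ j ≤ m, d j = d' j) :
    cnt d m = cnt d' m := by
  unfold cnt
  refine Finset.sum_congr rfl fun j hj => ?_
  rw [Finset.mem_range] at hj
  rw [h j (by omega), h (j + 1) (by omega)]

lemma splice_lt {d : ℕ → Bool} {p j : ℕ} (h : j < p) : splice d p j = d j := by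
  simp [splice, h]

lemma splice_self {d : ℕ → Bool} {p : ℕ} : splice d p p = true := by
  simp [splice]

lemma splice_succ {d : ℕ → Bool} {p : ℕ} : splice d p (p + 1) = false := by
  simp [splice]

lemma splice_ge {d : ℕ → Bool} {p j : ℕ} (h : p + 2 ≤ j) : splice d p j = d (j - 1) := by
  have h1 : ¬ j < p := by omega
  have h2 : j ≠ p := by omega
  have h3 : j ≠ p + 1 := by omega
  simp [splice, h1, h2, h3]

/-- formula for insertion at the end. -/
lemma cnt_splice_top (d : ℕ → Bool) (n : ℕ) (hn : 1 ≤ n) :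
    cnt (splice d n) n = cnt d (n - 1) + (if d (n - 1) then 0 else 1) := by
  obtain ⟨m, rfl⟩ : ∃ m, n = m + 1 := ⟨n - 1, by omega⟩
  rw [cnt_succ]
  have h1 : cnt (splice d (m + 1)) m = cnt d m :=
    cnt_congr fun j hj => splice_lt (by omega)
  have h2 : splice d (m + 1) m = d m := splice_lt (by omega)
  have h3 : splice d (m + 1) (m + 1) = true := splice_self
  rw [h1, h2, h3]
  simp only [Nat.add_sub_cancel]

/-- formula for insertion at the front, `n ≥ 2`. -/
lemma cnt_splice_zero (d : ℕ → Bool) (n : ℕ) (hn : 2 ≤ n) :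
    cnt (splice d 0) n + (if d 0 = d 1 then 0 else 1)
      = cnt d (n - 1) + 1 + (if d 1 then 1 else 0) := by
  induction n, hn using Nat.le_induction with
  | base =>
    have e0 : splice d 0 0 = true := splice_self
    have e1 : splice d 0 1 = false := splice_succ
    have e2 : splice d 0 2 = d 1 := splice_ge (by omega)
    unfold cnt
    rw [Finset.sum_range_succ, Finset.sum_range_succ, Finset.sum_range_succ,
      Finset.sum_range_zero, Finset.sum_range_zero]
    rw [e0, e1, e2]
    cases hd0 : d 0 <;> cases hd1 : d 1 <;> simp [hd0, hd1]
  | succ n hn ih =>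
    have h1 : cnt (splice d 0) (n + 1) = cnt (splice d 0) n
        + (if splice d 0 n = splice d 0 (n + 1) then 0 else 1) := cnt_succ _ _
    have e1 : splice d 0 n = d (n - 1) := splice_ge (by omega)
    have e2 : splice d 0 (n + 1) = d n := by
      rw [splice_ge (by omega)]; simp
    have h2 : cnt d (n + 1 - 1) = cnt d (n - 1) + (if d (n - 1) = d n then 0 else 1) := by
      obtain ⟨m, rfl⟩ : ∃ m, n = m + 1 := ⟨n - 1, by omega⟩
      simpa using cnt_succ d m
    rw [h1, e1, e2, h2]
    omega

/-- main formula for interior insertion, `1 ≤ p`, `p + 1 ≤ n`. -/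
lemma cnt_splice_mid (d : ℕ → Bool) (p n : ℕ) (hp : 1 ≤ p) (hpn : p + 1 ≤ n) :
    cnt (splice d p) n + (if d (p - 1) = d p then 0 else 1)
        + (if p + 2 ≤ n then (if d p = d (p + 1) then 0 else 1) else 0)
      = cnt d (n - 1) + (if d (p - 1) then 0 else 1) + 1
        + (if p + 2 ≤ n then (if d (p + 1) then 1 else 0) else 0) := by
  induction n, hpn using Nat.le_induction with
  | base =>
    have hb : ¬ (p + 2 ≤ p + 1) := by omega
    rw [if_neg hb, if_neg hb]
    obtain ⟨q, rfl⟩ : ∃ q, p = q + 1 := ⟨p - 1, by omega⟩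
    have h1 : cnt (splice d (q + 1)) (q + 1 + 1)
        = cnt (splice d (q + 1)) q
          + (if splice d (q + 1) q = splice d (q + 1) (q + 1) then 0 else 1)
          + (if splice d (q + 1) (q + 1) = splice d (q + 1) (q + 2) then 0 else 1) := by
      rw [cnt_succ, cnt_succ]
    have e0 : cnt (splice d (q + 1)) q = cnt d q :=
      cnt_congr fun j hj => splice_lt (by omega)
    have e1 : splice d (q + 1) q = d q := splice_lt (by omega)
    have e2 : splice d (q + 1) (q + 1) = true := splice_self
    have e3 : splice d (q + 1) (q + 2) = false := splice_succ
    have h2 : cnt d (q + 1) = cnt d q + (if d q = d (q + 1) then 0 else 1) := cnt_succ _ _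
    rw [h1, e0, e1, e2, e3]
    simp only [Nat.add_sub_cancel, Nat.add_sub_cancel_left] at *
    rw [h2]
    cases hdq : d q <;> cases hdq1 : d (q + 1) <;> simp [hdq, hdq1]
  | succ n hn ih =>
    have h1 : cnt (splice d p) (n + 1) = cnt (splice d p) n
        + (if splice d p n = splice d p (n + 1) then 0 else 1) := cnt_succ _ _
    have h2 : cnt d (n + 1 - 1) = cnt d (n - 1) + (if d (n - 1) = d n then 0 else 1) := by
      obtain ⟨m, rfl⟩ : ∃ m, n = m + 1 := ⟨n - 1, by omega⟩
      simpa using cnt_succ d m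
    have e2 : splice d p (n + 1) = d n := by
      rw [splice_ge (by omega)]; simp
    rcases eq_or_lt_of_le hn with heq | hlt
    · -- n = p + 1 : the indicator turns on
      subst heq
      have e1 : splice d p (p + 1) = false := splice_succ
      have hb1 : ¬ (p + 2 ≤ p + 1) := by omega
      have hb2 : p + 2 ≤ p + 1 + 1 := by omega
      rw [if_neg hb1, if_neg hb1] at ih
      rw [h1, e1, e2, h2, if_pos hb2, if_pos hb2]
      have : p + 1 - 1 = p := by omega
      rw [this]
      cases hdp : d p <;> cases hdp1 : d (p + 1) <;> simp_all <;> omega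
    · -- n ≥ p + 2
      have hb : p + 2 ≤ n := by omega
      have hb' : p + 2 ≤ n + 1 := by omega
      rw [if_pos hb, if_pos hb] at ih
      have e1 : splice d p n = d (n - 1) := splice_ge (by omega)
      rw [h1, e1, e2, h2, if_pos hb', if_pos hb']
      omega


/-- positions where the run count stays the same. -/
def Zp (d : ℕ → Bool) (n p : ℕ) : Prop :=
  (1 ≤ p ∧ p + 1 ≤ n ∧ d (p - 1) = true ∧ d p = false) ∨
  (p + 2 ≤ n ∧ d p = true ∧ d (p + 1) = false) ∨
  (p = n ∧ d (n - 1) = true)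

/-- positions where the run count goes up by one. -/
def Op (d : ℕ → Bool) (n p : ℕ) : Prop :=
  (p = n ∧ d (n - 1) = false) ∨ (p = n - 1 ∧ d (n - 1) = true)

instance (d n p) : Decidable (Zp d n p) := by unfold Zp; infer_instance
instance (d n p) : Decidable (Op d n p) := by unfold Op; infer_instance

lemma splice_val (d : ℕ → Bool) (n : ℕ) (hn : 1 ≤ n) (hd0 : d 0 = true)
    (p : ℕ) (hp : p ≤ n) :
    cnt (splice d p) n
      = cnt d (n - 1) + (if Zp d n p then 0 else if Op d n p then 1 else 2) := by
  rcases eq_or_lt_of_le hp with rfl | hplt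
  · -- p = n
    rw [cnt_splice_top d p hn]
    cases hdl : d (p - 1)
    · have hz : ¬ Zp d p p := by
        rintro (⟨_, h, _, _⟩ | ⟨h, _, _⟩ | ⟨_, h⟩) <;> first | omega | simp_all
      have ho : Op d p p := Or.inl ⟨rfl, hdl⟩
      rw [if_neg hz, if_pos ho]
      simp
    · have hz : Zp d p p := Or.inr (Or.inr ⟨rfl, hdl⟩)
      rw [if_pos hz]
      simp
  · rcases Nat.eq_zero_or_pos p with rfl | hp1
    · -- p = 0
      rcases eq_or_lt_of_le hn with hn1 | hn2
    -- n = 1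
      · obtain rfl : n = 1 := hn1.symm
        have h1 : cnt (splice d 0) 1 = 1 := by
          unfold cnt
          rw [Finset.sum_range_succ, Finset.sum_range_zero, splice_self, splice_succ]
          simp
        have hz : ¬ Zp d 1 0 := by
          rintro (⟨h, _, _, _⟩ | ⟨h, _, _⟩ | ⟨h, _⟩) <;> omega
        have ho : Op d 1 0 := Or.inr ⟨rfl, by simpa using hd0⟩
        rw [h1, if_neg hz, if_pos ho]
        simp [cnt]
      · -- n ≥ 2
        have key := cnt_splice_zero d n (by omega)
        rw [hd0] at key
        cases hd1 : d 1
        · rw [hd1] at key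
          have hz : Zp d n 0 := Or.inr (Or.inl ⟨by omega, by simpa using hd0, hd1⟩)
          rw [if_pos hz]
          simp at key
          omega
        · rw [hd1] at key
          have hz : ¬ Zp d n 0 := by
            rintro (⟨h, _, _, _⟩ | ⟨_, _, h⟩ | ⟨h, _⟩) <;> first | omega | simp_all
          have ho : ¬ Op d n 0 := by
            rintro (⟨h, _⟩ | ⟨h, _⟩) <;> omega
          rw [if_neg hz, if_neg ho]
          simp at key
          omega
    · -- 1 ≤ p ≤ n - 1
      have key := cnt_splice_mid d p n hp1 (by omega)
      by_cases hp2 : p + 2 ≤ n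
      · rw [if_pos hp2, if_pos hp2] at key
        cases hdm : d (p - 1) <;> cases hdp : d p <;> cases hds : d (p + 1) <;>
          rw [hdm, hdp, hds] at key
        -- 8 cases
        ·
          have hz : ¬ Zp d n p := by
            rintro (⟨_, _, h, _⟩ | ⟨_, h, _⟩ | ⟨h, _⟩) <;> first | omega | simp_all
          have ho : ¬ Op d n p := by
            rintro (⟨h, _⟩ | ⟨h, h'⟩)
            · omega
            · have : p = n - 1 := h
              rw [this] at hdp; simp_all <;> omega
          rw [if_neg hz, if_neg ho]; simp_all <;> omega
        ·
          have hz : ¬ Zp d n p := by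
            rintro (⟨_, _, h, _⟩ | ⟨_, h, _⟩ | ⟨h, _⟩) <;> first | omega | simp_all
          have ho : ¬ Op d n p := by
            rintro (⟨h, _⟩ | ⟨h, h'⟩)
            · omega
            · have : p = n - 1 := h
              rw [this] at hdp; simp_all <;> omega
          rw [if_neg hz, if_neg ho]; simp_all <;> omega
        ·
          have hz : Zp d n p := Or.inr (Or.inl ⟨hp2, hdp, hds⟩)
          rw [if_pos hz]; simp_all <;> omega
        ·
          have hz : ¬ Zp d n p := by
            rintro (⟨_, _, h, _⟩ | ⟨_, _, h⟩ | ⟨h, _⟩) <;> first | omega | simp_all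
          have ho : ¬ Op d n p := by
            rintro (⟨h, _⟩ | ⟨h, h'⟩) <;> omega
          rw [if_neg hz, if_neg ho]; simp_all <;> omega
        ·
          have hz : Zp d n p := Or.inl ⟨hp1, by omega, hdm, hdp⟩
          rw [if_pos hz]; simp_all <;> omega
        ·
          have hz : Zp d n p := Or.inl ⟨hp1, by omega, hdm, hdp⟩
          rw [if_pos hz]; simp_all <;> omega
        ·
          have hz : Zp d n p := Or.inr (Or.inl ⟨hp2, hdp, hds⟩)
          rw [if_pos hz]; simp_all <;> omega
        ·
          have hz : ¬ Zp d n p := by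
            rintro (⟨_, _, _, h⟩ | ⟨_, _, h⟩ | ⟨h, _⟩) <;> first | omega | simp_all
          have ho : ¬ Op d n p := by
            rintro (⟨h, _⟩ | ⟨h, h'⟩) <;> omega
          rw [if_neg hz, if_neg ho]; simp_all <;> omega
      · -- p + 1 = n
        have hpn : p = n - 1 := by omega
        have hb : ¬ (p + 2 ≤ n) := hp2
        rw [if_neg hb, if_neg hb] at key
        have hdnp : d (n - 1) = d p := by rw [hpn]
        cases hdm : d (p - 1) <;> cases hdp : d p <;>
          rw [hdm, hdp] at key
        ·
          have hz : ¬ Zp d n p := by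
            rintro (⟨_, _, h, _⟩ | ⟨h, _, _⟩ | ⟨h, _⟩) <;> first | omega | simp_all
          have ho : ¬ Op d n p := by
            rintro (⟨h, _⟩ | ⟨_, h⟩)
            · omega
            · rw [hdnp, hdp] at h; simp_all
          rw [if_neg hz, if_neg ho]; simp_all <;> omega
        ·
          have hz : ¬ Zp d n p := by
            rintro (⟨_, _, h, _⟩ | ⟨h, _, _⟩ | ⟨h, _⟩) <;> first | omega | simp_all
          have ho : Op d n p := Or.inr ⟨hpn, by rw [hdnp, hdp]⟩
          rw [if_neg hz, if_pos ho]; simp_all <;> omega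
        ·
          have hz : Zp d n p := Or.inl ⟨hp1, by omega, hdm, hdp⟩
          rw [if_pos hz]; simp_all <;> omega
        ·
          have hz : ¬ Zp d n p := by
            rintro (⟨_, _, _, h⟩ | ⟨h, _, _⟩ | ⟨h, _⟩) <;> first | omega | simp_all
          have ho : Op d n p := Or.inr ⟨hpn, by rw [hdnp, hdp]⟩
          rw [if_neg hz, if_pos ho]; simp_all <;> omega

def pk (d : ℕ → Bool) (m : ℕ) : ℕ :=
  ∑ i ∈ Finset.range m, (if d i = true ∧ d (i + 1) = false then 1 else 0)

def vl (d : ℕ → Bool) (m : ℕ) : ℕ :=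
  ∑ i ∈ Finset.range m, (if d i = false ∧ d (i + 1) = true then 1 else 0)

lemma pk_eq_vl (d : ℕ → Bool) (hd0 : d 0 = true) (m : ℕ) :
    pk d m = vl d m + (if d m then 0 else 1) := by
  induction m with
  | zero => simp [pk, vl, hd0]
  | succ m ih =>
    have hp : pk d (m + 1) = pk d m + (if d m = true ∧ d (m + 1) = false then 1 else 0) := by
      unfold pk; exact Finset.sum_range_succ _ _
    have hv : vl d (m + 1) = vl d m + (if d m = false ∧ d (m + 1) = true then 1 else 0) := by
      unfold vl; exact Finset.sum_range_succ _ _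
    rw [hp, hv, ih]
    cases hm : d m <;> cases hm1 : d (m + 1) <;> simp [hm, hm1]

lemma cnt_eq_pk_vl (d : ℕ → Bool) (m : ℕ) : cnt d m = pk d m + vl d m := by
  unfold cnt pk vl
  rw [← Finset.sum_add_distrib]
  refine Finset.sum_congr rfl fun i _ => ?_
  cases h1 : d i <;> cases h2 : d (i + 1) <;> simp

lemma card_Z (d : ℕ → Bool) (n : ℕ) (hn : 1 ≤ n) (hd0 : d 0 = true) :
    ((Finset.range (n + 1)).filter (Zp d n)).card = 1 + cnt d (n - 1) := by
  rw [Finset.card_filter]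
  have key : ∀ p ∈ Finset.range (n + 1), (if Zp d n p then (1 : ℕ) else 0)
      = (if 1 ≤ p ∧ p + 1 ≤ n ∧ d (p - 1) = true ∧ d p = false then 1 else 0)
        + (if p + 2 ≤ n ∧ d p = true ∧ d (p + 1) = false then 1 else 0)
        + (if p = n ∧ d (n - 1) = true then 1 else 0) := by
    intro p _
    by_cases h1 : 1 ≤ p ∧ p + 1 ≤ n ∧ d (p - 1) = true ∧ d p = false
    · have h2 : ¬ (p + 2 ≤ n ∧ d p = true ∧ d (p + 1) = false) := by
        rintro ⟨_, h, _⟩; rw [h1.2.2.2] at h; simp at h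
      have h3 : ¬ (p = n ∧ d (n - 1) = true) := by rintro ⟨h, _⟩; omega
      have hz : Zp d n p := Or.inl h1
      rw [if_pos hz, if_pos h1, if_neg h2, if_neg h3]
    · by_cases h2 : p + 2 ≤ n ∧ d p = true ∧ d (p + 1) = false
      · have h3 : ¬ (p = n ∧ d (n - 1) = true) := by rintro ⟨h, _⟩; omega
        have hz : Zp d n p := Or.inr (Or.inl h2)
        rw [if_pos hz, if_neg h1, if_pos h2, if_neg h3]
      · by_cases h3 : p = n ∧ d (n - 1) = true
        · have hz : Zp d n p := Or.inr (Or.inr h3)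
          rw [if_pos hz, if_neg h1, if_neg h2, if_pos h3]
        · have hz : ¬ Zp d n p := by rintro (h | h | h) <;> tauto
          rw [if_neg hz, if_neg h1, if_neg h2, if_neg h3]
  rw [Finset.sum_congr rfl key]
  rw [Finset.sum_add_distrib, Finset.sum_add_distrib]
  have S1 : (∑ p ∈ Finset.range (n + 1),
      if 1 ≤ p ∧ p + 1 ≤ n ∧ d (p - 1) = true ∧ d p = false then (1:ℕ) else 0)
      = pk d (n - 1) := by
    rw [Finset.sum_range_succ']
    have h0 : ¬ (1 ≤ 0 ∧ 0 + 1 ≤ n ∧ d (0 - 1) = true ∧ d 0 = false) := by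
      rintro ⟨h, _⟩; omega
    rw [if_neg h0, add_zero]
    obtain ⟨m, rfl⟩ : ∃ m, n = m + 1 := ⟨n - 1, by omega⟩
    rw [Finset.sum_range_succ]
    have hl : ¬ (1 ≤ m + 1 ∧ m + 1 + 1 ≤ m + 1 ∧ d (m + 1 - 1) = true ∧ d (m + 1) = false) := by
      rintro ⟨_, h, _⟩; omega
    rw [if_neg hl, add_zero]
    simp only [Nat.add_sub_cancel]
    refine Finset.sum_congr rfl fun i hi => ?_
    rw [Finset.mem_range] at hi
    have : (1 ≤ i + 1 ∧ i + 1 + 1 ≤ m + 1 ∧ d (i + 1 - 1) = true ∧ d (i + 1) = false)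
        ↔ (d i = true ∧ d (i + 1) = false) := by
      constructor
      · rintro ⟨_, _, h, h'⟩; simpa using ⟨h, h'⟩
      · rintro ⟨h, h'⟩; refine ⟨by omega, by omega, by simpa using h, h'⟩
    exact if_congr this rfl rfl
  have S2 : (∑ p ∈ Finset.range (n + 1),
      if p + 2 ≤ n ∧ d p = true ∧ d (p + 1) = false then (1:ℕ) else 0)
      = pk d (n - 1) := by
    obtain ⟨m, rfl⟩ : ∃ m, n = m + 1 := ⟨n - 1, by omega⟩
    rw [show m + 1 + 1 = m + 2 by rfl, Finset.sum_range_succ, Finset.sum_range_succ]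
    have h1 : ¬ (m + 2 ≤ m + 1 ∧ d m = true ∧ d (m + 1) = false) := by
      rintro ⟨h, _⟩; omega
    have h2 : ¬ (m + 1 + 2 ≤ m + 1 ∧ d (m + 1) = true ∧ d (m + 1 + 1) = false) := by
      rintro ⟨h, _⟩; omega
    rw [if_neg h1, if_neg h2, add_zero, add_zero]
    simp only [Nat.add_sub_cancel]
    refine Finset.sum_congr rfl fun i hi => ?_
    rw [Finset.mem_range] at hi
    have : (i + 2 ≤ m + 1 ∧ d i = true ∧ d (i + 1) = false)
        ↔ (d i = true ∧ d (i + 1) = false) := by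
      constructor
      · rintro ⟨_, h, h'⟩; exact ⟨h, h'⟩
      · rintro ⟨h, h'⟩; exact ⟨by omega, h, h'⟩
    exact if_congr this rfl rfl
  have S3 : (∑ p ∈ Finset.range (n + 1), if p = n ∧ d (n - 1) = true then (1:ℕ) else 0)
      = if d (n - 1) then 1 else 0 := by
    cases hdn : d (n - 1)
    · simp [hdn]
    · simp only [hdn, and_true]
      rw [Finset.sum_ite_eq' (Finset.range (n + 1)) n (fun _ => (1:ℕ))]
      simp
  rw [S1, S2, S3]
  have hpv := pk_eq_vl d hd0 (n - 1)
  have hc := cnt_eq_pk_vl d (n - 1)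
  cases hdn : d (n - 1) <;> rw [hdn] at hpv <;> simp at hpv ⊢ <;> omega

lemma card_O (d : ℕ → Bool) (n : ℕ) (hn : 1 ≤ n) :
    ((Finset.range (n + 1)).filter (Op d n)).card = 1 := by
  cases hdn : d (n - 1)
  · have : (Finset.range (n + 1)).filter (Op d n) = {n} := by
      ext p
      simp only [Finset.mem_filter, Finset.mem_range, Op, hdn, Finset.mem_singleton]
      constructor
      · rintro ⟨_, (⟨h, _⟩ | ⟨_, h⟩)⟩
        · exact h
        · simp at h
      · rintro rfl
        refine ⟨by omega, Or.inl ⟨rfl, by simp⟩⟩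
    rw [this]; rfl
  · have : (Finset.range (n + 1)).filter (Op d n) = {n - 1} := by
      ext p
      simp only [Finset.mem_filter, Finset.mem_range, Op, hdn, Finset.mem_singleton]
      constructor
      · rintro ⟨_, (⟨_, h⟩ | ⟨h, _⟩)⟩
        · simp at h
        · exact h
      · rintro rfl
        refine ⟨by omega, Or.inr ⟨rfl, by simp⟩⟩
    rw [this]; rfl

lemma not_Z_of_O (d : ℕ → Bool) (n : ℕ) (hn : 1 ≤ n) (p : ℕ)
    (hz : Zp d n p) (ho : Op d n p) : False := by
  rcases ho with ⟨rfl, h⟩ | ⟨rfl, h⟩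
  · rcases hz with ⟨_, h', _, _⟩ | ⟨h', _, _⟩ | ⟨_, h'⟩
    · omega
    · omega
    · rw [h] at h'; simp at h'
  · rcases hz with ⟨_, _, _, h'⟩ | ⟨h', _, _⟩ | ⟨h', _⟩
    · rw [h] at h'; simp at h'
    · omega
    · omega

theorem abstract_main {M : Type*} [AddCommMonoid M] (f : ℕ → M) (d : ℕ → Bool) (n : ℕ)
    (hn : 1 ≤ n) (hd0 : d 0 = true) :
    ∑ p ∈ Finset.range (n + 1), f (1 + cnt (splice d p) n)
      = (1 + cnt d (n - 1)) • f (1 + cnt d (n - 1))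
        + f (2 + cnt d (n - 1)) + (n - (1 + cnt d (n - 1))) • f (3 + cnt d (n - 1)) := by
  have hsum : ∀ p ∈ Finset.range (n + 1), f (1 + cnt (splice d p) n)
      = if Zp d n p then f (1 + cnt d (n - 1))
        else if Op d n p then f (2 + cnt d (n - 1)) else f (3 + cnt d (n - 1)) := by
    intro p hp
    rw [Finset.mem_range] at hp
    rw [splice_val d n hn hd0 p (by omega)]
    by_cases hz : Zp d n p
    · rw [if_pos hz, if_pos hz, Nat.add_zero]
    · rw [if_neg hz, if_neg hz]
      by_cases ho : Op d n p
      · rw [if_pos ho, if_pos ho]; congr 1; omega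
      · rw [if_neg ho, if_neg ho]; congr 1; omega
  rw [Finset.sum_congr rfl hsum, Finset.sum_ite, Finset.sum_ite]
  rw [Finset.sum_const, Finset.sum_const, Finset.sum_const]
  rw [Finset.filter_filter, Finset.filter_filter]
  have e1 : ((Finset.range (n + 1)).filter (Zp d n)).card = 1 + cnt d (n - 1) :=
    card_Z d n hn hd0
  have e2 : ((Finset.range (n + 1)).filter fun p => ¬Zp d n p ∧ Op d n p)
      = (Finset.range (n + 1)).filter (Op d n) := by
    refine Finset.filter_congr fun p _ => ?_
    constructor
    · exact fun h => h.2
    · exact fun h => ⟨fun hz => not_Z_of_O d n hn p hz h, h⟩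
  have e3 : ((Finset.range (n + 1)).filter fun p => ¬Zp d n p ∧ ¬Op d n p).card
      = n - (1 + cnt d (n - 1)) := by
    have t1 := Finset.card_filter_add_card_filter_not (s := Finset.range (n + 1))
      (p := Zp d n)
    have t2 := Finset.card_filter_add_card_filter_not
      (s := (Finset.range (n + 1)).filter fun p => ¬Zp d n p) (p := Op d n)
    rw [Finset.filter_filter, Finset.filter_filter] at t2
    have e2' : ((Finset.range (n + 1)).filter fun p => ¬Zp d n p ∧ Op d n p).card = 1 := by
      rw [e2]; exact card_O d n hn
    have hcnt : cnt d (n - 1) ≤ n - 1 := cnt_le d (n - 1)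
    have hcard : (Finset.range (n + 1)).card = n + 1 := Finset.card_range (n + 1)
    omega
  rw [e1, e3, e2]
  rw [card_O d n hn]
  rw [one_smul]
  exact (add_assoc _ _ _).symm


open Equiv

/-! ### Permutation side -/

lemma permEntry_le (n : ℕ) (σ : Equiv.Perm (Fin n)) (i : ℕ) : permEntry n σ i ≤ n := by
  unfold permEntry
  split
  · next h => have := (σ ⟨i - 1, by omega⟩).isLt; omega
  · omega

lemma permEntry_zero (n : ℕ) (σ : Equiv.Perm (Fin n)) : permEntry n σ 0 = 0 := by
  unfold permEntry
  rw [dif_neg (by omega)]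

lemma permEntry_pos (n : ℕ) (σ : Equiv.Perm (Fin n)) {i : ℕ} (h1 : 1 ≤ i) (h2 : i ≤ n) :
    1 ≤ permEntry n σ i := by
  unfold permEntry
  rw [dif_pos ⟨h1, h2⟩]
  omega

lemma permEntry_inj (n : ℕ) (σ : Equiv.Perm (Fin n)) {i j : ℕ} (hi : i ≤ n) (hj : j ≤ n)
    (hij : i ≠ j) : permEntry n σ i ≠ permEntry n σ j := by
  rcases Nat.eq_zero_or_pos i with rfl | hi1
  · rcases Nat.eq_zero_or_pos j with rfl | hj1
    · omega
    · have := permEntry_pos n σ hj1 hj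
      rw [permEntry_zero]
      omega
  · rcases Nat.eq_zero_or_pos j with rfl | hj1
    · have := permEntry_pos n σ hi1 hi
      rw [permEntry_zero]
      omega
    · unfold permEntry
      rw [dif_pos ⟨hi1, hi⟩, dif_pos ⟨hj1, hj⟩]
      intro h
      have h2 : σ ⟨i - 1, by omega⟩ = σ ⟨j - 1, by omega⟩ := Fin.ext (by omega)
      have h3 := σ.injective h2
      have h4 : i - 1 = j - 1 := congrArg Fin.val h3
      omega

/-- the direction sequence of the extended permutation. -/
def dseq (n : ℕ) (σ : Equiv.Perm (Fin n)) (j : ℕ) : Bool :=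
  decide (permEntry n σ j < permEntry n σ (j + 1))

lemma dseq_zero (n : ℕ) (σ : Equiv.Perm (Fin n)) (hn : 1 ≤ n) : dseq n σ 0 = true := by
  have h0 := permEntry_zero n σ
  have h1 := permEntry_pos n σ (le_refl 1) hn
  simp only [dseq, decide_eq_true_eq, Nat.zero_add]
  omega

lemma udRun_eq (n : ℕ) (σ : Equiv.Perm (Fin n)) (hn : 1 ≤ n) :
    udRunCount n σ = 1 + cnt (dseq n σ) (n - 1) := by
  unfold udRunCount
  rw [if_neg (by omega)]
  congr 1
  rw [Finset.card_filter]
  unfold cnt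
  refine Finset.sum_nbij' (fun (i : ℕ) => i - 1) (fun (j : ℕ) => j + 1) ?_ ?_ ?_ ?_ ?_
  · intro i hi
    simp only [Finset.mem_Icc] at hi
    simp only [Finset.mem_range]
    omega
  · intro j hj
    simp only [Finset.mem_range] at hj
    simp only [Finset.mem_Icc]
    omega
  · intro i hi
    simp only [Finset.mem_Icc] at hi
    beta_reduce
    omega
  · intro j _
    beta_reduce
    omega
  · intro i hi
    rw [Finset.mem_Icc] at hi
    have e1 : i - 1 + 1 = i := by omega
    have e2 : i - 1 + 1 + 1 = i + 1 := by omega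
    have n1 : permEntry n σ (i - 1) ≠ permEntry n σ i := permEntry_inj n σ (by omega) (by omega) (by omega)
    have n2 : permEntry n σ i ≠ permEntry n σ (i + 1) := permEntry_inj n σ (by omega) (by omega) (by omega)
    simp only [dseq, e1, e2, decide_eq_decide]
    by_cases hc : (permEntry n σ (i - 1) < permEntry n σ i ∧ permEntry n σ (i + 1) < permEntry n σ i) ∨
      (permEntry n σ i < permEntry n σ (i - 1) ∧ permEntry n σ i < permEntry n σ (i + 1))
    · rw [if_pos hc, if_neg (by omega)]
    · rw [if_neg hc, if_pos (by omega)]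

lemma udRun_le (n : ℕ) (σ : Equiv.Perm (Fin n)) : udRunCount n σ ≤ n := by
  rcases Nat.eq_zero_or_pos n with rfl | hn
  · simp [udRunCount]
  · rw [udRun_eq n σ hn]
    have := cnt_le (dseq n σ) (n - 1)
    omega

/-! ### Insertion of the maximum -/

/-- the function inserting the value `n` at position `p`. -/
def insFun (n : ℕ) (τ : Equiv.Perm (Fin n)) (p : Fin (n + 1)) (j : Fin (n + 1)) : Fin (n + 1) :=
  Fin.insertNth (α := fun _ => Fin (n + 1)) p (Fin.last n) (fun i => (τ i).castSucc) j

lemma insFun_same (n : ℕ) (τ : Equiv.Perm (Fin n)) (p : Fin (n + 1)) :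
    insFun n τ p p = Fin.last n := by
  unfold insFun
  rw [Fin.insertNth_apply_same]

lemma insFun_succAbove (n : ℕ) (τ : Equiv.Perm (Fin n)) (p : Fin (n + 1)) (i : Fin n) :
    insFun n τ p (p.succAbove i) = (τ i).castSucc := by
  unfold insFun
  rw [Fin.insertNth_apply_succAbove]

lemma insFun_injective (n : ℕ) (τ : Equiv.Perm (Fin n)) (p : Fin (n + 1)) :
    Function.Injective (insFun n τ p) := by
  intro a b hab
  by_cases ha : a = p <;> by_cases hb : b = p
  · rw [ha, hb]
  · exfalso
    obtain ⟨j, hj⟩ := Fin.exists_succAbove_eq hb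
    rw [ha, insFun_same, ← hj, insFun_succAbove] at hab
    exact absurd hab.symm (Fin.castSucc_lt_last (τ j)).ne
  · exfalso
    obtain ⟨i, hi⟩ := Fin.exists_succAbove_eq ha
    rw [hb, insFun_same, ← hi, insFun_succAbove] at hab
    exact absurd hab (Fin.castSucc_lt_last (τ i)).ne
  · obtain ⟨i, hi⟩ := Fin.exists_succAbove_eq ha
    obtain ⟨j, hj⟩ := Fin.exists_succAbove_eq hb
    rw [← hi, ← hj, insFun_succAbove, insFun_succAbove] at hab
    rw [← hi, ← hj, τ.injective (Fin.castSucc_injective n hab)]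

/-- insert the value `n` into the permutation at position `p`. -/
noncomputable def insPerm (n : ℕ) (τ : Equiv.Perm (Fin n)) (p : Fin (n + 1)) :
    Equiv.Perm (Fin (n + 1)) :=
  Equiv.ofBijective (insFun n τ p)
    (Finite.injective_iff_bijective.mp (insFun_injective n τ p))

lemma insPerm_apply_same (n : ℕ) (τ : Equiv.Perm (Fin n)) (p : Fin (n + 1)) :
    insPerm n τ p p = Fin.last n := insFun_same n τ p

lemma insPerm_apply_succAbove (n : ℕ) (τ : Equiv.Perm (Fin n)) (p : Fin (n + 1)) (i : Fin n) :
    insPerm n τ p (p.succAbove i) = (τ i).castSucc := insFun_succAbove n τ p i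

lemma insPerm_injective (n : ℕ) :
    Function.Injective (fun x : Equiv.Perm (Fin n) × Fin (n + 1) => insPerm n x.1 x.2) := by
  rintro ⟨τ, p⟩ ⟨τ', p'⟩ h
  simp only at h
  have hp : p = p' := by
    by_contra hne
    obtain ⟨i, hi⟩ := Fin.exists_succAbove_eq (Ne.symm hne)
    have h1 : insPerm n τ p p' = insPerm n τ' p' p' := by rw [h]
    rw [insPerm_apply_same, ← hi, insPerm_apply_succAbove] at h1
    exact absurd h1 (Fin.castSucc_lt_last (τ i)).ne
  have hτ : τ = τ' := by
    apply Equiv.ext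
    intro i
    have h1 : insPerm n τ p (p.succAbove i) = insPerm n τ' p' (p.succAbove i) := by rw [h]
    rw [insPerm_apply_succAbove, hp, insPerm_apply_succAbove] at h1
    rw [Fin.castSucc_injective n h1]
  rw [hτ, hp]

lemma insPerm_bijective (n : ℕ) :
    Function.Bijective (fun x : Equiv.Perm (Fin n) × Fin (n + 1) => insPerm n x.1 x.2) := by
  rw [Fintype.bijective_iff_injective_and_card]
  refine ⟨insPerm_injective n, ?_⟩
  rw [Fintype.card_prod, Fintype.card_perm, Fintype.card_perm, Fintype.card_fin,
    Fintype.card_fin, Nat.factorial_succ, Nat.mul_comm]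

/-! entries of the inserted permutation -/

lemma insPerm_entry_le (n : ℕ) (τ : Equiv.Perm (Fin n)) (p : Fin (n + 1)) {i : ℕ}
    (h : i ≤ (p : ℕ)) : permEntry (n + 1) (insPerm n τ p) i = permEntry n τ i := by
  rcases Nat.eq_zero_or_pos i with rfl | hi1
  · rw [permEntry_zero, permEntry_zero]
  · have hpn : (p : ℕ) ≤ n := by omega
    have hin : i ≤ n := by omega
    unfold permEntry
    rw [dif_pos ⟨hi1, by omega⟩, dif_pos ⟨hi1, hin⟩]
    have hn1 : i - 1 < n := by omega
    set j : Fin n := ⟨i - 1, hn1⟩ with hj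
    have hcast : (⟨i - 1, by omega⟩ : Fin (n + 1)) = p.succAbove j := by
      rw [Fin.succAbove_of_castSucc_lt p j (by rw [Fin.lt_def]; simp [hj]; omega)]
      rfl
    rw [hcast, insPerm_apply_succAbove]
    rfl

lemma insPerm_entry_eq (n : ℕ) (τ : Equiv.Perm (Fin n)) (p : Fin (n + 1)) :
    permEntry (n + 1) (insPerm n τ p) ((p : ℕ) + 1) = n + 1 := by
  unfold permEntry
  rw [dif_pos ⟨by omega, by have := p.isLt; omega⟩]
  have hcast : (⟨(p : ℕ) + 1 - 1, by have := p.isLt; omega⟩ : Fin (n + 1)) = p :=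
    Fin.ext (by simp)
  rw [hcast, insPerm_apply_same]
  rfl

lemma insPerm_entry_ge (n : ℕ) (τ : Equiv.Perm (Fin n)) (p : Fin (n + 1)) {i : ℕ}
    (h : (p : ℕ) + 2 ≤ i) : permEntry (n + 1) (insPerm n τ p) i = permEntry n τ (i - 1) := by
  by_cases hi : i ≤ n + 1
  · unfold permEntry
    rw [dif_pos ⟨by omega, hi⟩, dif_pos ⟨by omega, by omega⟩]
    have hn1 : i - 2 < n := by omega
    set j : Fin n := ⟨i - 2, hn1⟩ with hj
    have hcast : (⟨i - 1, by omega⟩ : Fin (n + 1)) = p.succAbove j := by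
      rw [Fin.succAbove_of_le_castSucc p j (by rw [Fin.le_def]; simp [hj]; omega)]
      exact Fin.ext (by simp [hj]; omega)
    rw [hcast, insPerm_apply_succAbove]
    have : (⟨i - 1 - 1, by omega⟩ : Fin n) = j := Fin.ext (by simp [hj]; omega)
    rw [this]
    rfl
  · unfold permEntry
    rw [dif_neg (by omega), dif_neg (by omega)]

lemma dseq_ins (n : ℕ) (τ : Equiv.Perm (Fin n)) (p : Fin (n + 1)) (j : ℕ) :
    dseq (n + 1) (insPerm n τ p) j = splice (dseq n τ) (p : ℕ) j := by
  by_cases h1 : j < (p : ℕ)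
  · rw [splice_lt h1]
    unfold dseq
    rw [insPerm_entry_le n τ p (by omega), insPerm_entry_le n τ p (by omega)]
  · by_cases h2 : j = (p : ℕ)
    · subst h2
      rw [splice_self]
      unfold dseq
      rw [insPerm_entry_le n τ p (le_refl _), insPerm_entry_eq]
      have := permEntry_le n τ (p : ℕ)
      simp only [decide_eq_true_eq]
      omega
    · by_cases h3 : j = (p : ℕ) + 1
      · subst h3
        rw [splice_succ]
        unfold dseq
        rw [insPerm_entry_eq, insPerm_entry_ge n τ p (by omega)]
        have := permEntry_le n τ ((p : ℕ) + 1 + 1 - 1)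
        simp only [decide_eq_false_iff_not]
        omega
      · have h4 : (p : ℕ) + 2 ≤ j := by omega
        rw [splice_ge h4]
        unfold dseq
        rw [insPerm_entry_ge n τ p (by omega), insPerm_entry_ge n τ p (by omega)]
        have e : j + 1 - 1 = j - 1 + 1 := by omega
        rw [e]

lemma udRun_ins (n : ℕ) (τ : Equiv.Perm (Fin n)) (p : Fin (n + 1)) :
    udRunCount (n + 1) (insPerm n τ p) = 1 + cnt (splice (dseq n τ) (p : ℕ)) n := by
  rw [udRun_eq (n + 1) _ (by omega)]
  congr 1
  exact cnt_congr fun j _ => dseq_ins n τ p j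

/-- the key insertion sum, per permutation `τ`. -/
lemma sum_ins {M : Type*} [AddCommMonoid M] (f : ℕ → M) (n : ℕ) (hn : 1 ≤ n)
    (τ : Equiv.Perm (Fin n)) :
    ∑ p : Fin (n + 1), f (udRunCount (n + 1) (insPerm n τ p))
      = udRunCount n τ • f (udRunCount n τ) + f (udRunCount n τ + 1)
        + (n - udRunCount n τ) • f (udRunCount n τ + 2) := by
  have step1 : ∑ p : Fin (n + 1), f (udRunCount (n + 1) (insPerm n τ p))
      = ∑ q ∈ Finset.range (n + 1), f (1 + cnt (splice (dseq n τ) q) n) := by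
    rw [← Fin.sum_univ_eq_sum_range (fun q => f (1 + cnt (splice (dseq n τ) q) n)) (n + 1)]
    exact Fintype.sum_congr _ _ fun p => by rw [udRun_ins]
  rw [step1, abstract_main f (dseq n τ) n hn (dseq_zero n τ hn)]
  have hr := udRun_eq n τ hn
  have e1 : udRunCount n τ + 1 = 2 + cnt (dseq n τ) (n - 1) := by omega
  have e2 : udRunCount n τ + 2 = 3 + cnt (dseq n τ) (n - 1) := by omega
  rw [e1, e2, hr]

/-! ### Final assembly -/

lemma udRun_ge1 (n : ℕ) (σ : Equiv.Perm (Fin n)) (hn : 1 ≤ n) : 1 ≤ udRunCount n σ := by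
  rw [udRun_eq n σ hn]
  omega

lemma regroup (n : ℕ) :
    (∑ σ : Equiv.Perm (Fin n),
      (X 1 : MvPolynomial (Fin 3) ℚ) ^ udRunCount n σ * X 2 ^ (n - udRunCount n σ))
      = ∑ k ∈ Finset.range (n + 1),
          (udRunNum n k : MvPolynomial (Fin 3) ℚ) * X 1 ^ k * X 2 ^ (n - k) := by
  rw [← Finset.sum_fiberwise_of_maps_to (g := fun σ : Equiv.Perm (Fin n) => udRunCount n σ)
    (t := Finset.range (n + 1))
    (fun σ _ => by
      show udRunCount n σ ∈ Finset.range (n + 1)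
      exact Finset.mem_range.mpr (Nat.lt_succ_of_le (udRun_le n σ)))
    (fun σ => (X 1 : MvPolynomial (Fin 3) ℚ) ^ udRunCount n σ * X 2 ^ (n - udRunCount n σ))]
  refine Finset.sum_congr rfl fun k _ => ?_
  have step : ∀ σ ∈ Finset.univ.filter fun σ : Equiv.Perm (Fin n) => udRunCount n σ = k,
      (X 1 : MvPolynomial (Fin 3) ℚ) ^ udRunCount n σ * X 2 ^ (n - udRunCount n σ)
        = X 1 ^ k * X 2 ^ (n - k) := by
    intro σ hσ
    rw [Finset.mem_filter] at hσ
    rw [hσ.2]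
  rw [Finset.sum_congr rfl step, Finset.sum_const, udRunNum, nsmul_eq_mul, mul_assoc]

lemma alg_step (D : Derivation ℚ (MvPolynomial (Fin 3) ℚ) (MvPolynomial (Fin 3) ℚ))
    (hx : D (X 1) = X 1 * X 2) (hy : D (X 2) = X 1 ^ 2) (n r : ℕ)
    (h1 : 1 ≤ r) (h2 : r ≤ n) :
    D (X 1 ^ r * X 2 ^ (n - r)) + X 1 ^ r * X 2 ^ (n - r) * X 1
      = r • ((X 1 : MvPolynomial (Fin 3) ℚ) ^ r * X 2 ^ (n + 1 - r))
        + X 1 ^ (r + 1) * X 2 ^ (n + 1 - (r + 1))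
        + (n - r) • (X 1 ^ (r + 2) * X 2 ^ (n + 1 - (r + 2))) := by
  obtain ⟨m, rfl⟩ : ∃ m, r = m + 1 := ⟨r - 1, by omega⟩
  obtain ⟨s, rfl⟩ : ∃ s, n = m + 1 + s := ⟨n - (m + 1), by omega⟩
  have e1 : m + 1 + s - (m + 1) = s := by omega
  have e2 : m + 1 + s + 1 - (m + 1) = s + 1 := by omega
  have e3 : m + 1 + s + 1 - (m + 1 + 1) = s := by omega
  have e4 : m + 1 + s + 1 - (m + 1 + 2) = s - 1 := by omega
  rw [e1, e2, e3, e4]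
  rw [Derivation.leibniz, Derivation.leibniz_pow, Derivation.leibniz_pow, hx, hy]
  cases s with
  | zero =>
    simp only [Nat.zero_eq, pow_zero, Nat.sub_self, zero_smul, smul_zero, zero_add, add_zero,
      Nat.add_zero, zero_nsmul, smul_eq_mul, nsmul_eq_mul]
    push_cast
    ring
  | succ t =>
    have e5 : t + 1 - 1 = t := by omega
    rw [e5]
    simp only [smul_eq_mul, nsmul_eq_mul]
    push_cast
    ring

theorem stmt12_aux (D : Derivation ℚ (MvPolynomial (Fin 3) ℚ) (MvPolynomial (Fin 3) ℚ))
    (ha : D (X 0) = X 0 * X 1) (hx : D (X 1) = X 1 * X 2) (hy : D (X 2) = X 1 ^ 2) (n : ℕ) :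
    (⇑D)^[n] (X 0) = X 0 * ∑ σ : Equiv.Perm (Fin n),
      (X 1 : MvPolynomial (Fin 3) ℚ) ^ udRunCount n σ * X 2 ^ (n - udRunCount n σ) := by
  induction n with
  | zero =>
    have h0 : ∀ σ : Equiv.Perm (Fin 0), udRunCount 0 σ = 0 := fun σ => by simp [udRunCount]
    simp only [Function.iterate_zero, id_eq]
    have S0 : (∑ σ : Equiv.Perm (Fin 0),
        (X 1 : MvPolynomial (Fin 3) ℚ) ^ udRunCount 0 σ * X 2 ^ (0 - udRunCount 0 σ))
        = ∑ _σ : Equiv.Perm (Fin 0), (1 : MvPolynomial (Fin 3) ℚ) :=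
      Finset.sum_congr rfl fun σ _ => by rw [h0 σ]; norm_num
    rw [S0, Finset.sum_const]
    simp [Fintype.card_perm]
  | succ m ih =>
    rw [Function.iterate_succ_apply', ih, Derivation.leibniz]
    simp only [smul_eq_mul]
    rw [ha]
    rcases Nat.eq_zero_or_pos m with rfl | hm
    · -- m = 0
      have h0 : ∀ σ : Equiv.Perm (Fin 0), udRunCount 0 σ = 0 := fun σ => by simp [udRunCount]
      have h1 : ∀ σ : Equiv.Perm (Fin 1), udRunCount 1 σ = 1 := fun σ => by
        rw [udRun_eq 1 σ (le_refl 1)]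
        simp [cnt]
      have S0 : (∑ σ : Equiv.Perm (Fin 0),
          (X 1 : MvPolynomial (Fin 3) ℚ) ^ udRunCount 0 σ * X 2 ^ (0 - udRunCount 0 σ))
          = ∑ _σ : Equiv.Perm (Fin 0), (1 : MvPolynomial (Fin 3) ℚ) :=
        Finset.sum_congr rfl fun σ _ => by rw [h0 σ]; norm_num
      have S1 : (∑ σ : Equiv.Perm (Fin 1),
          (X 1 : MvPolynomial (Fin 3) ℚ) ^ udRunCount 1 σ * X 2 ^ (0 + 1 - udRunCount 1 σ))
          = ∑ _σ : Equiv.Perm (Fin 1), (X 1 : MvPolynomial (Fin 3) ℚ) :=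
        Finset.sum_congr rfl fun σ _ => by rw [h1 σ]; norm_num
      rw [S0, S1, Finset.sum_const, Finset.sum_const]
      simp only [Finset.card_univ, Fintype.card_perm, Fintype.card_fin, smul_eq_mul]
      norm_num [Derivation.map_one_eq_zero]
    · -- m ≥ 1
      rw [map_sum]
      have hsum2 : (∑ σ : Equiv.Perm (Fin (m + 1)),
          (X 1 : MvPolynomial (Fin 3) ℚ) ^ udRunCount (m + 1) σ
            * X 2 ^ (m + 1 - udRunCount (m + 1) σ))
          = ∑ σ : Equiv.Perm (Fin m),
              (D (X 1 ^ udRunCount m σ * X 2 ^ (m - udRunCount m σ))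
                + X 1 ^ udRunCount m σ * X 2 ^ (m - udRunCount m σ) * X 1) := by
        rw [← Fintype.sum_bijective _ (insPerm_bijective m)
          (fun x : Equiv.Perm (Fin m) × Fin (m + 1) =>
            (X 1 : MvPolynomial (Fin 3) ℚ) ^ udRunCount (m + 1) (insPerm m x.1 x.2)
              * X 2 ^ (m + 1 - udRunCount (m + 1) (insPerm m x.1 x.2)))
          (fun σ => (X 1 : MvPolynomial (Fin 3) ℚ) ^ udRunCount (m + 1) σ
              * X 2 ^ (m + 1 - udRunCount (m + 1) σ))
          (fun x => rfl)]
        rw [Fintype.sum_prod_type]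
        refine Finset.sum_congr rfl fun τ _ => ?_
        rw [alg_step D hx hy m (udRunCount m τ) (udRun_ge1 m τ hm) (udRun_le m τ)]
        exact sum_ins (fun k => (X 1 : MvPolynomial (Fin 3) ℚ) ^ k * X 2 ^ (m + 1 - k)) m hm τ
      rw [hsum2, Finset.sum_add_distrib, ← Finset.sum_mul]
      ring

end UDRuns


/-- for the derivation of `ℚ[a,x,y]` with `D a = a·x`, `D x = x·y`,
`D y = x²` (here `a = X 0`, `x = X 1`, `y = X 2`),
`Dⁿ(a) = a·Σ_k Λ(n,k)·x^k·y^{n−k}`. -/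
theorem stmt_12 (D : Derivation ℚ (MvPolynomial (Fin 3) ℚ) (MvPolynomial (Fin 3) ℚ))
    (ha : D (X 0) = X 0 * X 1) (hx : D (X 1) = X 1 * X 2) (hy : D (X 2) = X 1 ^ 2) (n : ℕ) :
    (⇑D)^[n] (X 0) = X 0 * ∑ k ∈ Finset.range (n + 1),
      (udRunNum n k : MvPolynomial (Fin 3) ℚ) * X 1 ^ k * X 2 ^ (n - k) := by
  rw [UDRuns.stmt12_aux D ha hx hy n, UDRuns.regroup n]
end

section
/- For all integers n ≥ 1 and k ≥ 1, the numbers Λ(n,k) of permutations of [n] with exactly k up-down runs satisfy the recurrence Λ(n,k) = k·Λ(n−1,k) + Λ(n−1,k−1) + (n−k+1)·Λ(n−1,k−2). -/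
/-- `Λ(n,k)` for an integer `k`: the number of permutations of `[n]` with exactly `k`
up-down runs (in particular `0` when `k < 0`). -/
def udRunNumZ (n : ℕ) (k : ℤ) : ℕ :=
  (Finset.univ.filter fun σ : Equiv.Perm (Fin n) => (udRunCount n σ : ℤ) = k).card


namespace UDAux

def wrun (m : ℕ) (w : ℕ → Bool) : ℕ :=
  1 + ((Finset.Icc 1 (m - 1)).filter fun i => w (i - 1) ≠ w i).card

def wins (P : ℕ) (w : ℕ → Bool) : ℕ → Bool := fun j =>
  if j + 2 ≤ P then w j else if j + 1 = P then false else if j = P then true else w (j - 1)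

lemma Icc_succ_right' (a b : ℕ) (h : a ≤ b + 1) :
    Finset.Icc a (b + 1) = insert (b + 1) (Finset.Icc a b) := by
  ext x; simp only [Finset.mem_Icc, Finset.mem_insert]; omega

lemma card_filter_insert {α : Type*} [DecidableEq α] (x : α) (s : Finset α) (hx : x ∉ s)
    (p : α → Prop) [DecidablePred p] :
    ((insert x s).filter p).card = (if p x then 1 else 0) + (s.filter p).card := by
  rw [Finset.filter_insert]
  split_ifs
  · rw [Finset.card_insert_of_notMem (fun h => hx (Finset.mem_of_mem_filter _ h))]; omega
  · simp

lemma card_filter_Icc_pred (a b : ℕ) (hab : a ≤ b) (hb : 1 ≤ b) (p : ℕ → Prop)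
    [DecidablePred p] :
    ((Finset.Icc a b).filter p).card
      = (if p b then 1 else 0) + ((Finset.Icc a (b - 1)).filter p).card := by
  have h1 : Finset.Icc a b = insert b (Finset.Icc a (b - 1)) := by
    have := Icc_succ_right' a (b - 1) (by omega)
    rwa [show b - 1 + 1 = b by omega] at this
  rw [h1, card_filter_insert]
  simp only [Finset.mem_Icc]; omega

lemma wrun_pos (m : ℕ) (w : ℕ → Bool) : 1 ≤ wrun m w := Nat.le_add_right _ _

lemma wrun_le (m : ℕ) (hm : 1 ≤ m) (w : ℕ → Bool) : wrun m w ≤ m := by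
  have h1 := Finset.card_filter_le (Finset.Icc 1 (m - 1)) (fun i => w (i - 1) ≠ w i)
  have h2 : (Finset.Icc 1 (m - 1)).card = m - 1 := by rw [Nat.card_Icc]; omega
  unfold wrun; omega

lemma wrun_congr (m : ℕ) (u v : ℕ → Bool) (h : ∀ j < m, u j = v j) : wrun m u = wrun m v := by
  unfold wrun
  congr 1
  apply congrArg
  apply Finset.filter_congr
  intro i hi
  simp only [Finset.mem_Icc] at hi
  rw [h (i - 1) (by omega), h i (by omega)]

lemma wrun_one (u : ℕ → Bool) : wrun 1 u = 1 := by
  unfold wrun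
  rw [Finset.Icc_eq_empty (by omega)]
  simp

lemma wrun_succ (N : ℕ) (hN : 1 ≤ N) (u : ℕ → Bool) :
    wrun (N + 1) u = wrun N u + (if u (N - 1) = u N then 0 else 1) := by
  unfold wrun
  rw [show N + 1 - 1 = N from rfl, card_filter_Icc_pred 1 N (by omega) hN]
  by_cases h : u (N - 1) = u N <;> simp [h] <;> omega


lemma iteOrFact (c : Prop) [Decidable c] (a b : ℕ) :
    (c ∧ (if c then a else b) = a) ∨ (¬c ∧ (if c then a else b) = b) := by
  split_ifs with h
  · exact Or.inl ⟨h, rfl⟩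
  · exact Or.inr ⟨h, rfl⟩

set_option maxHeartbeats 1000000 in
lemma final_arith (m k t e1 ε α β γ γ' r' r k' S : ℕ)
    (hk : 1 ≤ k) (ht : 1 ≤ t) (htm : t ≤ m - 1) (hm : 2 ≤ m)
    (hα : α ≤ 1) (hβ : β ≤ 1) (hγγ' : γ + γ' = 1)
    (he1 : (α = β ∧ e1 = 0) ∨ (¬(α = β) ∧ e1 = 1))
    (hε : (β = γ ∧ ε = 0) ∨ (¬(β = γ) ∧ ε = 1))
    (hr' : r' = t + e1) (hr : r = r' + ε) (hk' : k = k' + ε)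
    (iVm2 iVm1 iVm iUm1 iUm s1 s2 s3 r1 r2 r3 : ℕ)
    (hiVm2 : (r + γ = k ∧ iVm2 = 1) ∨ (¬(r + γ = k) ∧ iVm2 = 0))
    (hiVm1 : (r' + β + 1 = k ∧ iVm1 = 1) ∨ (¬(r' + β + 1 = k) ∧ iVm1 = 0))
    (hiVm : (t + α + 1 + γ' = k ∧ iVm = 1) ∨ (¬(t + α + 1 + γ' = k) ∧ iVm = 0))
    (hiUm1 : (r' + β = k' ∧ iUm1 = 1) ∨ (¬(r' + β = k') ∧ iUm1 = 0))
    (hiUm : (t + α + 1 = k' ∧ iUm = 1) ∨ (¬(t + α + 1 = k') ∧ iUm = 0))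
    (hs1 : (r' = k' ∧ s1 = r') ∨ (¬(r' = k') ∧ s1 = 0))
    (hs2 : (r' + 1 = k' ∧ s2 = 1) ∨ (¬(r' + 1 = k') ∧ s2 = 0))
    (hs3 : (r' + 2 = k' ∧ s3 = m - r') ∨ (¬(r' + 2 = k') ∧ s3 = 0))
    (hr1 : (r = k ∧ r1 = r) ∨ (¬(r = k) ∧ r1 = 0))
    (hr2 : (r + 1 = k ∧ r2 = 1) ∨ (¬(r + 1 = k) ∧ r2 = 0))
    (hr3 : (r + 2 = k ∧ r3 = m + 1 - r) ∨ (¬(r + 2 = k) ∧ r3 = 0))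
    (hIH : iUm1 + (iUm + S) = s1 + s2 + s3) :
    iVm2 + (iVm1 + (iVm + S)) = r1 + r2 + r3 := by omega

/-- Key combinatorial lemma: distribution of run counts over all `m+1` insertion
slots of a new maximum. -/
lemma key (m : ℕ) : 1 ≤ m → ∀ w : ℕ → Bool, w 0 = false → ∀ k : ℕ,
    ((Finset.Icc 1 (m + 1)).filter fun P => wrun (m + 1) (wins P w) = k).card
      = (if wrun m w = k then wrun m w else 0) + (if wrun m w + 1 = k then 1 else 0)
        + (if wrun m w + 2 = k then m - wrun m w else 0) := by
  induction m with
  | zero => omega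
  | succ m ih =>
    intro _ w hw k
    rcases Nat.lt_or_ge m 2 with hm | hm
    · -- base cases : statement for 1 and 2
      interval_cases m
      · -- statement for m + 1 = 1
        have hv1 : wrun 2 (wins 1 w) = 2 := by
          rw [wrun_succ 1 (by omega), wrun_one]
          norm_num [wins]
        have hv2 : wrun 2 (wins 2 w) = 1 := by
          rw [wrun_succ 1 (by omega), wrun_one]
          norm_num [wins, hw]
        rw [card_filter_Icc_pred 1 2 (by omega) (by omega),
            show (2:ℕ) - 1 = 1 from rfl,
            card_filter_Icc_pred 1 1 (by omega) (by omega),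
            show (1:ℕ) - 1 = 0 from rfl,
            Finset.Icc_eq_empty (show ¬(1 ≤ 0) by omega), Finset.filter_empty,
            Finset.card_empty, hv1, hv2, wrun_one]
        split_ifs <;> omega
      · -- statement for m + 1 = 2
        have hr : wrun 2 w = 1 + (if false = w 1 then 0 else 1) := by
          rw [wrun_succ 1 (by omega), wrun_one, show (1:ℕ) - 1 = 0 from rfl, hw]
        have hv1 : wrun 3 (wins 1 w) = 2 + (if true = w 1 then 0 else 1) := by
          rw [show (3:ℕ) = 2 + 1 from rfl, wrun_succ 2 (by omega), wrun_succ 1 (by omega),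
              wrun_one]
          norm_num [wins]
        have hv2 : wrun 3 (wins 2 w) = 2 := by
          rw [show (3:ℕ) = 2 + 1 from rfl, wrun_succ 2 (by omega), wrun_succ 1 (by omega),
              wrun_one]
          norm_num [wins, hw]
        have hv3 : wrun 3 (wins 3 w) = 1 + (if false = w 1 then 0 else 1)
            + (if w 1 = false then 0 else 1) := by
          rw [show (3:ℕ) = 2 + 1 from rfl, wrun_succ 2 (by omega), wrun_succ 1 (by omega),
              wrun_one]
          norm_num [wins, hw]
        rw [card_filter_Icc_pred 1 3 (by omega) (by omega),
            show (3:ℕ) - 1 = 2 from rfl,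
            card_filter_Icc_pred 1 2 (by omega) (by omega),
            show (2:ℕ) - 1 = 1 from rfl,
            card_filter_Icc_pred 1 1 (by omega) (by omega),
            show (1:ℕ) - 1 = 0 from rfl,
            Finset.Icc_eq_empty (show ¬(1 ≤ 0) by omega), Finset.filter_empty,
            Finset.card_empty, hv1, hv2, hv3, hr]
        cases hb : w 1 <;> simp only [hb] <;> norm_num <;> split_ifs <;> omega
    · -- step : m ≥ 2
      have hm1 : 1 ≤ m := by omega
      have hrr' : wrun (m + 1) w = wrun m w + (if w (m - 1) = w m then 0 else 1) :=
        wrun_succ m hm1 w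
      have hr't : wrun m w = wrun (m - 1) w + (if w (m - 2) = w (m - 1) then 0 else 1) := by
        have h := wrun_succ (m - 1) (by omega) w
        rwa [show m - 1 + 1 = m by omega, show m - 1 - 1 = m - 2 by omega] at h
      have ht1 : 1 ≤ wrun (m - 1) w := wrun_pos _ _
      have htm : wrun (m - 1) w ≤ m - 1 := wrun_le (m - 1) (by omega) w
      -- shift lemma for low slots
      have hU : ∀ P ∈ Finset.Icc 1 (m - 1),
          wrun (m + 1 + 1) (wins P w)
            = wrun (m + 1) (wins P w) + (if w (m - 1) = w m then 0 else 1) := by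
        intro P hP
        simp only [Finset.mem_Icc] at hP
        have e1 : wins P w m = w (m - 1) := by
          unfold wins; rw [if_neg (by omega), if_neg (by omega), if_neg (by omega)]
        have e2 : wins P w (m + 1) = w m := by
          unfold wins
          rw [if_neg (by omega), if_neg (by omega), if_neg (by omega)]
          norm_num
        have h := wrun_succ (m + 1) (by omega) (wins P w)
        rwa [show m + 1 - 1 = m from rfl, e1, e2] at h
      -- special slot values
      have e2m : wins m w m = true := by
        unfold wins; rw [if_neg (by omega), if_neg (by omega), if_pos rfl]
      have eUm : wrun (m + 1) (wins m w)
          = wrun (m - 1) w + (if w (m - 2) = false then 0 else 1) + 1 := by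
        have c1 : wrun (m - 1) (wins m w) = wrun (m - 1) w := by
          apply wrun_congr; intro j hj; unfold wins; rw [if_pos (by omega)]
        have e1 : wins m w (m - 1) = false := by
          unfold wins; rw [if_neg (by omega), if_pos (by omega)]
        have e3 : wins m w (m - 2) = w (m - 2) := by
          unfold wins; rw [if_pos (by omega)]
        have A := wrun_succ (m - 1) (by omega) (wins m w)
        rw [show m - 1 + 1 = m by omega, show m - 1 - 1 = m - 2 by omega, e3, e1, c1] at A
        have B := wrun_succ m hm1 (wins m w)
        rw [e1, e2m] at B
        norm_num at B
        rw [B, A]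
      have eUm1 : wrun (m + 1) (wins (m + 1) w)
          = wrun m w + (if w (m - 1) = false then 0 else 1) := by
        have c1 : wrun m (wins (m + 1) w) = wrun m w := by
          apply wrun_congr; intro j hj; unfold wins; rw [if_pos (by omega)]
        have e1 : wins (m + 1) w (m - 1) = w (m - 1) := by
          unfold wins; rw [if_pos (by omega)]
        have e2 : wins (m + 1) w m = false := by
          unfold wins; rw [if_neg (by omega), if_pos (by omega)]
        have B := wrun_succ m hm1 (wins (m + 1) w)
        rwa [e1, e2, c1] at B
      have eVm : wrun (m + 1 + 1) (wins m w)
          = wrun (m - 1) w + (if w (m - 2) = false then 0 else 1) + 1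
            + (if true = w m then 0 else 1) := by
        have e4 : wins m w (m + 1) = w m := by
          unfold wins; rw [if_neg (by omega), if_neg (by omega), if_neg (by omega)]
          norm_num
        have B := wrun_succ (m + 1) (by omega) (wins m w)
        rwa [show m + 1 - 1 = m from rfl, e2m, e4, eUm] at B
      have eVm1 : wrun (m + 1 + 1) (wins (m + 1) w)
          = wrun m w + (if w (m - 1) = false then 0 else 1) + 1 := by
        have e2 : wins (m + 1) w m = false := by
          unfold wins; rw [if_neg (by omega), if_pos (by omega)]
        have e5 : wins (m + 1) w (m + 1) = true := by
          unfold wins; rw [if_neg (by omega), if_neg (by omega), if_pos rfl]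
        have B := wrun_succ (m + 1) (by omega) (wins (m + 1) w)
        rw [show m + 1 - 1 = m from rfl, e2, e5, eUm1] at B
        norm_num at B
        exact B
      have eVm2 : wrun (m + 1 + 1) (wins (m + 1 + 1) w)
          = wrun (m + 1) w + (if w m = false then 0 else 1) := by
        have c1 : wrun (m + 1) (wins (m + 1 + 1) w) = wrun (m + 1) w := by
          apply wrun_congr; intro j hj; unfold wins; rw [if_pos (by omega)]
        have e6 : wins (m + 1 + 1) w m = w m := by
          unfold wins; rw [if_pos (by omega)]
        have e7 : wins (m + 1 + 1) w (m + 1) = false := by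
          unfold wins; rw [if_neg (by omega), if_pos rfl]
        have B := wrun_succ (m + 1) (by omega) (wins (m + 1 + 1) w)
        rwa [show m + 1 - 1 = m from rfl, e6, e7, c1] at B
      -- dispose of k = 0
      rcases Nat.eq_zero_or_pos k with rfl | hk
      · rw [Finset.filter_false_of_mem
            (fun P _ => by have := wrun_pos (m + 1 + 1) (wins P w); omega),
          Finset.card_empty,
          if_neg (by have := wrun_pos (m + 1) w; omega), if_neg (by omega), if_neg (by omega)]
      -- decompose the goal
      rw [card_filter_Icc_pred 1 (m + 1 + 1) (by omega) (by omega),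
          show m + 1 + 1 - 1 = m + 1 from rfl,
          card_filter_Icc_pred 1 (m + 1) (by omega) (by omega),
          show m + 1 - 1 = m from rfl,
          card_filter_Icc_pred 1 m (by omega) (by omega),
          eVm2, eVm1, eVm]
      rcases eq_or_ne (w (m - 1)) (w m) with hbc | hbc
      · -- ε = 0
        have hS : ((Finset.Icc 1 (m - 1)).filter
              fun P => wrun (m + 1 + 1) (wins P w) = k).card
            = ((Finset.Icc 1 (m - 1)).filter
              fun P => wrun (m + 1) (wins P w) = k).card := by
          apply congrArg
          apply Finset.filter_congr
          intro P hP
          rw [hU P hP, if_pos hbc]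
          omega
        rw [hS]
        have hMain := ih hm1 w hw k
        rw [card_filter_Icc_pred 1 (m + 1) (by omega) (by omega),
            show m + 1 - 1 = m from rfl,
            card_filter_Icc_pred 1 m (by omega) (by omega),
            eUm1, eUm] at hMain
        exact final_arith m k (wrun (m - 1) w)
          (if w (m - 2) = w (m - 1) then 0 else 1) (if w (m - 1) = w m then 0 else 1)
          (if w (m - 2) = false then 0 else 1) (if w (m - 1) = false then 0 else 1)
          (if w m = false then 0 else 1) (if true = w m then 0 else 1)
          (wrun m w) (wrun (m + 1) w) k _
          hk ht1 htm hm (by split_ifs <;> omega) (by split_ifs <;> omega)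
          (by cases h : w m <;> simp [h])
          (by cases h1 : w (m - 2) <;> cases h2 : w (m - 1) <;> simp [h1, h2])
          (by cases h1 : w (m - 1) <;> cases h2 : w m <;> simp [h1, h2])
          hr't hrr' (by rw [if_pos hbc]; omega)
          _ _ _ _ _ _ _ _ _ _ _
          (iteOrFact _ 1 0) (iteOrFact _ 1 0) (iteOrFact _ 1 0) (iteOrFact _ 1 0)
          (iteOrFact _ 1 0) (iteOrFact _ (wrun m w) 0) (iteOrFact _ 1 0)
          (iteOrFact _ (m - wrun m w) 0) (iteOrFact _ (wrun (m + 1) w) 0)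
          (iteOrFact _ 1 0) (iteOrFact _ (m + 1 - wrun (m + 1) w) 0)
          hMain
      · -- ε = 1
        have hS : ((Finset.Icc 1 (m - 1)).filter
              fun P => wrun (m + 1 + 1) (wins P w) = k).card
            = ((Finset.Icc 1 (m - 1)).filter
              fun P => wrun (m + 1) (wins P w) = k - 1).card := by
          apply congrArg
          apply Finset.filter_congr
          intro P hP
          rw [hU P hP, if_neg hbc]
          omega
        rw [hS]
        have hMain := ih hm1 w hw (k - 1)
        rw [card_filter_Icc_pred 1 (m + 1) (by omega) (by omega),
            show m + 1 - 1 = m from rfl,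
            card_filter_Icc_pred 1 m (by omega) (by omega),
            eUm1, eUm] at hMain
        exact final_arith m k (wrun (m - 1) w)
          (if w (m - 2) = w (m - 1) then 0 else 1) (if w (m - 1) = w m then 0 else 1)
          (if w (m - 2) = false then 0 else 1) (if w (m - 1) = false then 0 else 1)
          (if w m = false then 0 else 1) (if true = w m then 0 else 1)
          (wrun m w) (wrun (m + 1) w) (k - 1) _
          hk ht1 htm hm (by split_ifs <;> omega) (by split_ifs <;> omega)
          (by cases h : w m <;> simp [h])
          (by cases h1 : w (m - 2) <;> cases h2 : w (m - 1) <;> simp [h1, h2])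
          (by cases h1 : w (m - 1) <;> cases h2 : w m <;> simp [h1, h2])
          hr't hrr' (by rw [if_neg hbc]; omega)
          _ _ _ _ _ _ _ _ _ _ _
          (iteOrFact _ 1 0) (iteOrFact _ 1 0) (iteOrFact _ 1 0) (iteOrFact _ 1 0)
          (iteOrFact _ 1 0) (iteOrFact _ (wrun m w) 0) (iteOrFact _ 1 0)
          (iteOrFact _ (m - wrun m w) 0) (iteOrFact _ (wrun (m + 1) w) 0)
          (iteOrFact _ 1 0) (iteOrFact _ (m + 1 - wrun (m + 1) w) 0)
          hMain

/-! ### Permutation side -/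

lemma permEntry_le (n : ℕ) (σ : Equiv.Perm (Fin n)) (i : ℕ) : permEntry n σ i ≤ n := by
  rw [permEntry]
  split_ifs with h
  · have := (σ ⟨i - 1, by omega⟩).isLt; omega
  · omega

lemma permEntry_zero (n : ℕ) (σ : Equiv.Perm (Fin n)) : permEntry n σ 0 = 0 := by
  rw [permEntry, dif_neg (by omega)]

lemma permEntry_eq (n : ℕ) (σ : Equiv.Perm (Fin n)) (i : ℕ) (h1 : 1 ≤ i) (h2 : i ≤ n) :
    permEntry n σ i = ((σ ⟨i - 1, by omega⟩ : Fin n) : ℕ) + 1 := by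
  rw [permEntry, dif_pos ⟨h1, h2⟩]

lemma permEntry_adj_ne (n : ℕ) (σ : Equiv.Perm (Fin n)) (j : ℕ) (hj : j + 1 ≤ n) :
    permEntry n σ j ≠ permEntry n σ (j + 1) := by
  rcases Nat.eq_zero_or_pos j with rfl | hj0
  · rw [permEntry_zero, permEntry_eq n σ 1 (by omega) (by omega)]
    omega
  · rw [permEntry_eq n σ j (by omega) (by omega),
        permEntry_eq n σ (j + 1) (by omega) (by omega)]
    intro hEq
    have h1 : (σ ⟨j - 1, by omega⟩ : Fin n) = σ ⟨j + 1 - 1, by omega⟩ := by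
      apply Fin.ext; omega
    have h2 := σ.injective h1
    simp only [Fin.mk.injEq] at h2
    omega

/-- descent word of a permutation. -/
def dword (n : ℕ) (σ : Equiv.Perm (Fin n)) : ℕ → Bool :=
  fun j => decide (permEntry n σ (j + 1) < permEntry n σ j)

lemma dword_zero (n : ℕ) (σ : Equiv.Perm (Fin n)) : dword n σ 0 = false := by
  unfold dword
  rw [permEntry_zero]
  simp

lemma udRunCount_eq_wrun (n : ℕ) (hn : 1 ≤ n) (σ : Equiv.Perm (Fin n)) :
    udRunCount n σ = wrun n (dword n σ) := by
  rw [udRunCount, if_neg (by omega), wrun]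
  congr 1
  apply congrArg
  apply Finset.filter_congr
  intro i hi
  simp only [Finset.mem_Icc] at hi
  have h1 := permEntry_adj_ne n σ (i - 1) (by omega)
  have h2 := permEntry_adj_ne n σ i (by omega)
  rw [show i - 1 + 1 = i by omega] at h1
  unfold dword
  rw [show i - 1 + 1 = i by omega]
  simp only [ne_eq, decide_eq_decide]
  omega

/-- insertion of a new maximum at (0-indexed) slot `p`. -/
def insMax (m : ℕ) (p : Fin (m + 1)) (τ : Equiv.Perm (Fin m)) : Equiv.Perm (Fin (m + 1)) :=
  (finSuccEquiv' p).trans ((Equiv.optionCongr τ).trans (finSuccEquiv' (Fin.last m)).symm)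

lemma insMax_apply_self (m : ℕ) (p : Fin (m + 1)) (τ : Equiv.Perm (Fin m)) :
    insMax m p τ p = Fin.last m := by
  simp [insMax]

lemma insMax_apply_succAbove (m : ℕ) (p : Fin (m + 1)) (τ : Equiv.Perm (Fin m)) (j : Fin m) :
    insMax m p τ (p.succAbove j) = (τ j).castSucc := by
  simp [insMax, Fin.succAbove_last]

lemma permEntry_insMax (m : ℕ) (p : Fin (m + 1)) (τ : Equiv.Perm (Fin m)) (i : ℕ) :
    permEntry (m + 1) (insMax m p τ) i
      = if i = (p : ℕ) + 1 then m + 1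
        else if i ≤ (p : ℕ) then permEntry m τ i else permEntry m τ (i - 1) := by
  have hpm := p.isLt
  rcases Nat.lt_or_ge i 1 with hi | hi
  · have hi0 : i = 0 := by omega
    subst hi0
    rw [permEntry, dif_neg (by omega), if_neg (by omega), if_pos (by omega),
        permEntry, dif_neg (by omega)]
  rcases Nat.lt_or_ge (m + 1) i with hi2 | hi2
  · rw [permEntry, dif_neg (by omega), if_neg (by omega), if_neg (by omega),
        permEntry, dif_neg (by omega)]
  rw [permEntry, dif_pos ⟨hi, hi2⟩]
  rcases Nat.lt_trichotomy (i - 1) (p : ℕ) with h | h | h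
  · have hj : i - 1 < m := by omega
    have hkey : (⟨i - 1, by omega⟩ : Fin (m + 1)) = p.succAbove ⟨i - 1, hj⟩ := by
      rw [Fin.succAbove_of_castSucc_lt]
      · rfl
      · rw [Fin.lt_def]; simpa using h
    rw [hkey, insMax_apply_succAbove, if_neg (by omega), if_pos (by omega),
        permEntry, dif_pos ⟨hi, by omega⟩]
    simp [Fin.coe_castSucc]
  · have hkey : (⟨i - 1, by omega⟩ : Fin (m + 1)) = p := by
      apply Fin.ext; simpa using h
    rw [hkey, insMax_apply_self, if_pos (by omega)]
    simp [Fin.val_last]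
  · have hj : i - 2 < m := by omega
    have hkey : (⟨i - 1, by omega⟩ : Fin (m + 1)) = p.succAbove ⟨i - 2, hj⟩ := by
      rw [Fin.succAbove_of_le_castSucc]
      · apply Fin.ext; simp [Fin.val_succ]; omega
      · rw [Fin.le_def]; simpa using (by omega : (p : ℕ) ≤ i - 2)
    rw [hkey, insMax_apply_succAbove, if_neg (by omega), if_neg (by omega),
        permEntry, dif_pos ⟨by omega, by omega⟩]
    simp only [Fin.coe_castSucc]
    first
    | rfl
    | (congr 2 <;> omega)

lemma permEntry_insMax_low (m : ℕ) (p : Fin (m + 1)) (τ : Equiv.Perm (Fin m)) (i : ℕ)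
    (h : i ≤ (p : ℕ)) : permEntry (m + 1) (insMax m p τ) i = permEntry m τ i := by
  rw [permEntry_insMax, if_neg (by omega), if_pos h]

lemma permEntry_insMax_self (m : ℕ) (p : Fin (m + 1)) (τ : Equiv.Perm (Fin m)) (i : ℕ)
    (h : i = (p : ℕ) + 1) : permEntry (m + 1) (insMax m p τ) i = m + 1 := by
  rw [permEntry_insMax, if_pos h]

lemma permEntry_insMax_high (m : ℕ) (p : Fin (m + 1)) (τ : Equiv.Perm (Fin m)) (i : ℕ)
    (h : (p : ℕ) + 1 < i) : permEntry (m + 1) (insMax m p τ) i = permEntry m τ (i - 1) := by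
  rw [permEntry_insMax, if_neg (by omega), if_neg (by omega)]

lemma dword_insMax (m : ℕ) (p : Fin (m + 1)) (τ : Equiv.Perm (Fin m)) :
    ∀ j < m + 1, dword (m + 1) (insMax m p τ) j = wins ((p : ℕ) + 1) (dword m τ) j := by
  intro j hj
  have hpm := p.isLt
  unfold dword wins
  rcases Nat.lt_trichotomy j (p : ℕ) with h | h | h
  · -- j < p
    rw [permEntry_insMax_low m p τ (j + 1) (by omega), permEntry_insMax_low m p τ j (by omega),
        if_pos (show j + 2 ≤ (p : ℕ) + 1 by omega)]
  · -- j = p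
    rw [permEntry_insMax_self m p τ (j + 1) (by omega), permEntry_insMax_low m p τ j (by omega),
        if_neg (show ¬(j + 2 ≤ (p : ℕ) + 1) by omega),
        if_pos (show j + 1 = (p : ℕ) + 1 by omega)]
    have hle := permEntry_le m τ j
    simp only [decide_eq_false_iff_not]
    omega
  · rcases Nat.eq_or_lt_of_le h with h1 | h1
    · -- j = p + 1
      rw [permEntry_insMax_high m p τ (j + 1) (by omega),
          permEntry_insMax_self m p τ j (by omega),
          if_neg (show ¬(j + 2 ≤ (p : ℕ) + 1) by omega),
          if_neg (show ¬(j + 1 = (p : ℕ) + 1) by omega),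
          if_pos (show j = (p : ℕ) + 1 by omega)]
      have hle := permEntry_le m τ (j + 1 - 1)
      simp only [decide_eq_true_eq]
      omega
    · -- j ≥ p + 2
      rw [permEntry_insMax_high m p τ (j + 1) (by omega),
          permEntry_insMax_high m p τ j (by omega),
          if_neg (show ¬(j + 2 ≤ (p : ℕ) + 1) by omega),
          if_neg (show ¬(j + 1 = (p : ℕ) + 1) by omega),
          if_neg (show ¬(j = (p : ℕ) + 1) by omega)]
      have hjj : j - 1 + 1 = j := by omega
      simp only [hjj, Nat.add_sub_cancel]

lemma insMax_bijective (m : ℕ) :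
    Function.Bijective
      (fun pt : Fin (m + 1) × Equiv.Perm (Fin m) => insMax m pt.1 pt.2) := by
  rw [Fintype.bijective_iff_injective_and_card]
  constructor
  · rintro ⟨p, τ⟩ ⟨p', τ'⟩ h
    simp only [] at h
    have hp : p = p' := by
      by_contra hne
      obtain ⟨j, hj⟩ := Fin.exists_succAbove_eq hne
      have h1 : insMax m p τ p = Fin.last m := insMax_apply_self m p τ
      have h2 : insMax m p' τ' p = (τ' j).castSucc := by
        rw [← hj, insMax_apply_succAbove]
      rw [h, h2] at h1
      exact absurd h1 (Fin.ne_of_lt (Fin.castSucc_lt_last (τ' j)))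
    subst hp
    have hτ : τ = τ' := by
      apply Equiv.ext
      intro j
      have h1 : insMax m p τ (p.succAbove j) = (τ j).castSucc :=
        insMax_apply_succAbove m p τ j
      have h2 : insMax m p τ' (p.succAbove j) = (τ' j).castSucc :=
        insMax_apply_succAbove m p τ' j
      rw [h, h2] at h1
      exact Fin.castSucc_injective m h1.symm
    rw [hτ]
  · simp [Fintype.card_perm, Fintype.card_prod, Fintype.card_fin, Nat.factorial_succ]

lemma card_fin_slots (m : ℕ) (q : ℕ → Prop) [DecidablePred q] :
    (Finset.univ.filter fun p : Fin (m + 1) => q ((p : ℕ) + 1)).card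
      = ((Finset.Icc 1 (m + 1)).filter q).card := by
  refine Finset.card_bij (fun p _ => (p : ℕ) + 1) ?_ ?_ ?_
  · intro p hp
    simp only [Finset.mem_filter, Finset.mem_univ, true_and] at hp
    simp only [Finset.mem_filter, Finset.mem_Icc]
    have := p.isLt
    exact ⟨⟨by omega, by omega⟩, hp⟩
  · intro a _ b _ hab
    have hab' : (a : ℕ) + 1 = (b : ℕ) + 1 := hab
    apply Fin.ext
    omega
  · intro P hP
    simp only [Finset.mem_filter, Finset.mem_Icc] at hP
    refine ⟨⟨P - 1, by omega⟩, ?_, by simp; omega⟩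
    simp only [Finset.mem_filter, Finset.mem_univ, true_and]
    have : (((⟨P - 1, by omega⟩ : Fin (m + 1)) : ℕ)) + 1 = P := by simp; omega
    rw [this]
    exact hP.2

end UDAux

open UDAux in
/-- for `n, k ≥ 1`,
`Λ(n,k) = k·Λ(n−1,k) + Λ(n−1,k−1) + (n−k+1)·Λ(n−1,k−2)`. -/
theorem stmt_13 (n : ℕ) (hn : 1 ≤ n) (k : ℤ) (hk : 1 ≤ k) :
    (udRunNumZ n k : ℤ)
      = k * udRunNumZ (n - 1) k + udRunNumZ (n - 1) (k - 1)
          + ((n : ℤ) - k + 1) * udRunNumZ (n - 1) (k - 2) := by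
  obtain ⟨m, rfl⟩ : ∃ m, n = m + 1 := ⟨n - 1, by omega⟩
  rw [show m + 1 - 1 = m from rfl]
  have hkk : ((k.toNat : ℤ)) = k := Int.toNat_of_nonneg (by omega)
  set k₀ := k.toNat with hk₀
  rcases Nat.eq_zero_or_pos m with rfl | hm
  · -- n = 1
    have c1 : ∀ σ : Equiv.Perm (Fin 1), udRunCount 1 σ = 1 := by
      intro σ
      rw [udRunCount, if_neg (by omega), show (1:ℕ) - 1 = 0 from rfl,
          Finset.Icc_eq_empty (by omega), Finset.filter_empty, Finset.card_empty]
    have c0 : ∀ σ : Equiv.Perm (Fin 0), udRunCount 0 σ = 0 := fun σ => by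
      rw [udRunCount, if_pos rfl]
    have e1 : ∀ j : ℤ, (udRunNumZ 1 j : ℤ) = if j = 1 then 1 else 0 := by
      intro j
      rw [udRunNumZ]
      split_ifs with h
      · rw [Finset.filter_true_of_mem (fun σ _ => by rw [c1 σ, h]; norm_num)]
        rw [Finset.card_univ]
        simp [Fintype.card_perm]
      · rw [Finset.filter_false_of_mem (fun σ _ => by rw [c1 σ]; push_cast; omega),
            Finset.card_empty]
        norm_num
    have e0 : ∀ j : ℤ, (udRunNumZ 0 j : ℤ) = if j = 0 then 1 else 0 := by
      intro j
      rw [udRunNumZ]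
      split_ifs with h
      · rw [Finset.filter_true_of_mem (fun σ _ => by rw [c0 σ, h]; norm_num)]
        rw [Finset.card_univ]
        simp [Fintype.card_perm]
      · rw [Finset.filter_false_of_mem (fun σ _ => by rw [c0 σ]; push_cast; omega),
            Finset.card_empty]
        norm_num
    rw [e1, e0, e0, e0]
    push_cast
    split_ifs <;> omega
  · -- main case : n = m + 1, m ≥ 1
    have hins := insMax_bijective m
    have hL : (udRunNumZ (m + 1) k : ℤ)
        = ∑ τ : Equiv.Perm (Fin m), ∑ p : Fin (m + 1),
            (if (udRunCount (m + 1) (insMax m p τ) : ℤ) = k then (1 : ℤ) else 0) := by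
      rw [udRunNumZ, Finset.card_filter]
      push_cast
      rw [← Fintype.sum_bijective _ hins
          (fun pt : Fin (m + 1) × Equiv.Perm (Fin m) =>
            if (udRunCount (m + 1) (insMax m pt.1 pt.2) : ℤ) = k then (1 : ℤ) else 0)
          (fun σ => if (udRunCount (m + 1) σ : ℤ) = k then (1 : ℤ) else 0)
          (fun pt => rfl)]
      rw [Fintype.sum_prod_type]
      exact Finset.sum_comm
    have hinner : ∀ τ : Equiv.Perm (Fin m),
        ∑ p : Fin (m + 1),
            (if (udRunCount (m + 1) (insMax m p τ) : ℤ) = k then (1 : ℤ) else 0)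
          = ((if udRunCount m τ = k₀ then udRunCount m τ else 0)
              + (if udRunCount m τ + 1 = k₀ then 1 else 0)
              + (if udRunCount m τ + 2 = k₀ then m - udRunCount m τ else 0) : ℕ) := by
      intro τ
      have hbridge : ∀ p : Fin (m + 1),
          udRunCount (m + 1) (insMax m p τ)
            = wrun (m + 1) (wins ((p : ℕ) + 1) (dword m τ)) := by
        intro p
        rw [udRunCount_eq_wrun (m + 1) (by omega)]
        exact wrun_congr _ _ _ (dword_insMax m p τ)
      have step1 : ∑ p : Fin (m + 1),
            (if (udRunCount (m + 1) (insMax m p τ) : ℤ) = k then (1 : ℤ) else 0)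
          = ((Finset.univ.filter fun p : Fin (m + 1) =>
              wrun (m + 1) (wins ((p : ℕ) + 1) (dword m τ)) = k₀).card : ℤ) := by
        rw [Finset.card_filter]
        push_cast
        apply Finset.sum_congr rfl
        intro p _
        apply if_congr _ rfl rfl
        rw [hbridge p]
        omega
      rw [step1, card_fin_slots m (fun P => wrun (m + 1) (wins P (dword m τ)) = k₀),
          key m hm (dword m τ) (dword_zero m τ) k₀, ← udRunCount_eq_wrun m hm τ]
    have hA : (udRunNumZ m k : ℤ)
        = ∑ τ : Equiv.Perm (Fin m), (if udRunCount m τ = k₀ then (1 : ℤ) else 0) := by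
      rw [udRunNumZ, Finset.card_filter]
      push_cast
      apply Finset.sum_congr rfl
      intro τ _
      apply if_congr _ rfl rfl
      omega
    have hB : (udRunNumZ m (k - 1) : ℤ)
        = ∑ τ : Equiv.Perm (Fin m), (if udRunCount m τ + 1 = k₀ then (1 : ℤ) else 0) := by
      rw [udRunNumZ, Finset.card_filter]
      push_cast
      apply Finset.sum_congr rfl
      intro τ _
      apply if_congr _ rfl rfl
      omega
    have hC : (udRunNumZ m (k - 2) : ℤ)
        = ∑ τ : Equiv.Perm (Fin m), (if udRunCount m τ + 2 = k₀ then (1 : ℤ) else 0) := by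
      rw [udRunNumZ, Finset.card_filter]
      push_cast
      apply Finset.sum_congr rfl
      intro τ _
      apply if_congr _ rfl rfl
      omega
    rw [hL, Finset.sum_congr rfl (fun τ _ => hinner τ), hA, hB, hC,
        Finset.mul_sum, Finset.mul_sum, ← Finset.sum_add_distrib, ← Finset.sum_add_distrib]
    apply Finset.sum_congr rfl
    intro τ _
    have hr1 : 1 ≤ udRunCount m τ := by
      rw [udRunCount_eq_wrun m hm τ]; exact wrun_pos _ _
    have hr2 : udRunCount m τ ≤ m := by
      rw [udRunCount_eq_wrun m hm τ]; exact wrun_le m hm _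
    push_cast
    split_ifs <;> omega
end
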